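/- arXiv:2207.04486 — 5 statements merged into one kernel-verified Lean document; each statement's English description precedes it below -/
import Mathlib

section
/- For every bounded continuous section f of π and every y ∈ Y, iQ_t f(y) converges to max_{j=1,…,κ} f_j(y) as t → 0⁺. -/
open Metric Set Filter Topology MeasureTheory

/-- `F(t,y,z) = max_j f_j(z) + d(f(z), π⁻¹(y))² / (2t)`. -/
noncomputable def hlF {κ : ℕ} (Y : Set (EuclideanSpace ℝ (Fin κ)))
    (π : EuclideanSpace ℝ (Fin κ) → Y) (f : Y → EuclideanSpace ℝ (Fin κ))
    (t : ℝ) (y z : Y) : ℝ :=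
  (⨆ j, f z j) + (Metric.infDist (f z) (π ⁻¹' {y}))^2 / (2*t)

/-- The intrinsic Hopf–Lax semigroup `iQ_t f(y) = inf_{z ∈ Y} F(t,y,z)`. -/
noncomputable def iQ {κ : ℕ} (Y : Set (EuclideanSpace ℝ (Fin κ)))
    (π : EuclideanSpace ℝ (Fin κ) → Y) (f : Y → EuclideanSpace ℝ (Fin κ))
    (t : ℝ) (y : Y) : ℝ :=
  ⨅ z : Y, hlF Y π f t y z

/-- A minimizing sequence for `iQ_t f(y)`. -/
def IsMinSeq {κ : ℕ} (Y : Set (EuclideanSpace ℝ (Fin κ)))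
    (π : EuclideanSpace ℝ (Fin κ) → Y) (f : Y → EuclideanSpace ℝ (Fin κ))
    (t : ℝ) (y : Y) (u : ℕ → Y) : Prop :=
  Filter.Tendsto (fun n => hlF Y π f t y (u n)) Filter.atTop (nhds (iQ Y π f t y))

/-- `iD⁺f(y,t)`. -/
noncomputable def iDp {κ : ℕ} (Y : Set (EuclideanSpace ℝ (Fin κ)))
    (π : EuclideanSpace ℝ (Fin κ) → Y) (f : Y → EuclideanSpace ℝ (Fin κ))
    (y : Y) (t : ℝ) : ℝ :=
  sSup { a : ℝ | ∃ u : ℕ → Y, IsMinSeq Y π f t y u ∧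
    a = Filter.limsup (fun n => Metric.infDist (f (u n)) (π ⁻¹' {y})) Filter.atTop }

/-- `iD⁻f(y,t)`. -/
noncomputable def iDm {κ : ℕ} (Y : Set (EuclideanSpace ℝ (Fin κ)))
    (π : EuclideanSpace ℝ (Fin κ) → Y) (f : Y → EuclideanSpace ℝ (Fin κ))
    (y : Y) (t : ℝ) : ℝ :=
  sInf { a : ℝ | ∃ u : ℕ → Y, IsMinSeq Y π f t y u ∧
    a = Filter.liminf (fun n => Metric.infDist (f (u n)) (π ⁻¹' {y})) Filter.atTop }



lemma sep_lemma {E : Type*} [MetricSpace E] {K A U : Set E} (hK : IsCompact K)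
    (hAc : IsClosed A) (hA : A.Nonempty) (hU : IsOpen U) (hAU : A ⊆ U) :
    ∃ δ > 0, ∀ x ∈ K, Metric.infDist x A < δ → x ∈ U := by
  by_cases h : (K \ U).Nonempty
  · obtain ⟨x₀, hx₀, hmin⟩ := (hK.diff hU).exists_isMinOn h
      (Metric.continuous_infDist_pt A).continuousOn
    refine ⟨Metric.infDist x₀ A, ?_, ?_⟩
    · exact (hAc.notMem_iff_infDist_pos hA).mp (fun hx => hx₀.2 (hAU hx))
    · intro x hxK hlt
      by_contra hxU
      exact absurd (hmin ⟨hxK, hxU⟩) (not_le.mpr hlt)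
  · exact ⟨1, one_pos, fun x hx _ => by by_contra hxU; exact h ⟨x, hx, hxU⟩⟩

lemma coord_le_norm {κ : ℕ} (v : EuclideanSpace ℝ (Fin κ)) (j : Fin κ) : |v j| ≤ ‖v‖ := by
  rw [EuclideanSpace.norm_eq]
  rw [show |v j| = Real.sqrt (|v j|^2) by rw [Real.sqrt_sq_eq_abs, abs_abs]]
  apply Real.sqrt_le_sqrt
  exact Finset.single_le_sum (f := fun i => |v i|^2) (fun i _ => sq_nonneg _) (Finset.mem_univ j)


theorem stmt_1 (κ : ℕ) (hκ : 1 ≤ κ)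
    (Y : Set (EuclideanSpace ℝ (Fin κ))) (hY : Y.Nonempty) (hYb : Bornology.IsBounded Y)
    (π : EuclideanSpace ℝ (Fin κ) → Y) (hπc : Continuous π) (hπo : IsOpenMap π)
    (hπs : Function.Surjective π)
    (f : Y → EuclideanSpace ℝ (Fin κ)) (hfc : Continuous f)
    (hfb : Bornology.IsBounded (Set.range f)) (hsec : ∀ y : Y, π (f y) = y)

    (y : Y) :
    Filter.Tendsto (fun t => iQ Y π f t y) (nhdsWithin 0 (Set.Ioi (0:ℝ)))
      (nhds (⨆ j, f y j)) := by
  haveI : Nonempty Y := hY.to_subtype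
  haveI : Nonempty (Fin κ) := ⟨⟨0, hκ⟩⟩
  -- bound on f
  obtain ⟨R, hR⟩ : ∃ R : ℝ, ∀ z : Y, ‖f z‖ ≤ R := by
    obtain ⟨R, hR⟩ := hfb.subset_closedBall 0
    exact ⟨R, fun z => by simpa using hR ⟨z, rfl⟩⟩
  set g : Y → ℝ := fun z => ⨆ j, f z j with hgdef
  have hbdd : ∀ z : Y, BddAbove (Set.range fun j => f z j) :=
    fun z => (Set.finite_range _).bddAbove
  have hg_lb : ∀ z : Y, -R ≤ g z := by
    intro z
    refine le_trans ?_ (le_ciSup (hbdd z) ⟨0, hκ⟩)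
    have h1 := coord_le_norm (f z) ⟨0, hκ⟩
    have h2 := hR z
    have := neg_abs_le (f z ⟨0, hκ⟩)
    linarith
  have hg_ub : ∀ z : Y, g z ≤ R := fun z =>
    ciSup_le fun j => le_trans (le_abs_self _) ((coord_le_norm _ j).trans (hR z))
  -- continuity of g
  have hgc : Continuous g := by
    have hsup : Continuous fun v : EuclideanSpace ℝ (Fin κ) =>
        (Finset.univ : Finset (Fin κ)).sup' Finset.univ_nonempty (fun j => v j) :=
      Continuous.finset_sup'_apply _ (fun j _ => (EuclideanSpace.proj j).continuous)
    have : g = (fun v : EuclideanSpace ℝ (Fin κ) =>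
        (Finset.univ : Finset (Fin κ)).sup' Finset.univ_nonempty (fun j => v j)) ∘ f := by
      funext z
      simp [hgdef, Finset.sup'_univ_eq_ciSup, Function.comp]
    rw [this]
    exact hsup.comp hfc
  -- the fiber
  set A : Set (EuclideanSpace ℝ (Fin κ)) := π ⁻¹' {y} with hAdef
  have hAc : IsClosed A := (isClosed_singleton).preimage hπc
  have hfyA : f y ∈ A := by simp [hAdef, hsec y]
  have hAne : A.Nonempty := ⟨f y, hfyA⟩
  -- upper bound
  have hub : ∀ t : ℝ, 0 < t → iQ Y π f t y ≤ g y := by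
    intro t ht
    have hbl : BddBelow (Set.range fun z : Y => hlF Y π f t y z) := by
      refine ⟨-R, ?_⟩
      rintro _ ⟨z, rfl⟩
      have h1 : 0 ≤ (Metric.infDist (f z) (π ⁻¹' {y}))^2 / (2*t) :=
        div_nonneg (sq_nonneg _) (by linarith)
      have := hg_lb z
      unfold hlF
      simp only [hgdef] at this ⊢
      linarith
    have : iQ Y π f t y ≤ hlF Y π f t y y := ciInf_le hbl y
    refine le_trans this ?_
    unfold hlF
    rw [Metric.infDist_zero_of_mem hfyA]
    simp
    exact le_rfl
  -- lower bound
  have hlb : ∀ ε : ℝ, 0 < ε → ∃ t₀ > 0, ∀ t ∈ Set.Ioo (0:ℝ) t₀,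
      g y - ε ≤ iQ Y π f t y := by
    intro ε hε
    set U : Set (EuclideanSpace ℝ (Fin κ)) := π ⁻¹' {z : Y | g y - ε < g z} with hUdef
    have hUo : IsOpen U := (isOpen_lt continuous_const hgc).preimage hπc
    have hAU : A ⊆ U := by
      intro x hx
      have hxy : π x = y := hx
      simp only [hUdef, Set.mem_preimage, Set.mem_setOf_eq, hxy]
      linarith
    have hK : IsCompact (closure (Set.range f)) := hfb.isCompact_closure
    obtain ⟨δ, hδ, hsep⟩ := sep_lemma hK hAc hAne hUo hAU
    set C : ℝ := g y + R + 1 with hCdef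
    have hC : 0 < C := by have := hg_lb y; simp only [hCdef]; linarith
    refine ⟨δ^2 / (2*C), div_pos (by positivity) (by linarith), ?_⟩
    intro t ht
    refine le_ciInf fun z => ?_
    by_cases hz : f z ∈ U
    · have : g y - ε < g z := by
        have := hz
        simp only [hUdef, Set.mem_preimage, Set.mem_setOf_eq, hsec z] at this
        exact this
      have h1 : 0 ≤ (Metric.infDist (f z) (π ⁻¹' {y}))^2 / (2*t) :=
        div_nonneg (sq_nonneg _) (by linarith [ht.1])
      unfold hlF
      simp only [hgdef] at this ⊢
      linarith
    · have hzK : f z ∈ closure (Set.range f) := subset_closure (Set.mem_range_self z)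
      have hδle : δ ≤ Metric.infDist (f z) A := by
        by_contra h
        exact hz (hsep _ hzK (not_le.mp h))
      have ht2 : 0 < 2*t := by linarith [ht.1]
      have hCt : C < δ^2 / (2*t) := by
        rw [lt_div_iff₀ ht2]
        have h2t : 2*t < δ^2 / C := by
          have := ht.2
          calc 2*t < 2*(δ^2/(2*C)) := by linarith
            _ = δ^2 / C := by field_simp
        calc C * (2*t) < C * (δ^2/C) := by
              exact mul_lt_mul_of_pos_left h2t hC
          _ = δ^2 := by field_simp
      have hsq : δ^2 ≤ (Metric.infDist (f z) A)^2 :=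
        pow_le_pow_left₀ (le_of_lt hδ) hδle 2
      have hdiv : δ^2/(2*t) ≤ (Metric.infDist (f z) A)^2/(2*t) := by gcongr
      have := hg_lb z
      unfold hlF
      simp only [hgdef, hAdef] at this ⊢
      have hgyR := hg_lb y
      rw [hCdef] at hCt
      linarith
  -- conclude
  rw [Metric.tendsto_nhds]
  intro ε hε
  obtain ⟨t₀, ht₀, hlow⟩ := hlb (ε/2) (by linarith)
  filter_upwards [Ioo_mem_nhdsGT ht₀] with t ht
  rw [Real.dist_eq, abs_lt]
  have h1 := hub t ht.1
  have h2 := hlow t ht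
  constructor <;> simp only [hgdef] at h1 h2 <;> linarith
end

section
/- For every bounded continuous section f of π, every y ∈ Y and every δ > 0, the map t ↦ iQ_t f(y) is Lipschitz on (δ, ∞) with constant Osc(f)/δ, i.e. |iQ_t f(y) − iQ_s f(y)| ≤ (Osc(f)/δ) · |s − t| for all s, t ∈ (δ, ∞), where Osc(f) = sup_{z ∈ Y} max_{j=1,…,κ} f_j(z) − inf_{z ∈ Y} max_{j=1,…,κ} f_j(z). -/
open Metric Set Filter Topology MeasureTheory

lemma abs_coord_le_norm' {κ : ℕ} (x : EuclideanSpace ℝ (Fin κ)) (j : Fin κ) : |x j| ≤ ‖x‖ := by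
  rw [EuclideanSpace.norm_eq]
  calc |x j| = Real.sqrt (‖x j‖^2) := by
        rw [Real.sqrt_sq_eq_abs]; simp [Real.norm_eq_abs, abs_abs]
    _ ≤ _ := Real.sqrt_le_sqrt (Finset.single_le_sum (f := fun i => ‖x i‖^2)
        (fun i _ => sq_nonneg _) (Finset.mem_univ j))

theorem stmt_2 (κ : ℕ) (hκ : 1 ≤ κ)
    (Y : Set (EuclideanSpace ℝ (Fin κ))) (hY : Y.Nonempty) (hYb : Bornology.IsBounded Y)
    (π : EuclideanSpace ℝ (Fin κ) → Y) (hπc : Continuous π) (hπo : IsOpenMap π)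
    (hπs : Function.Surjective π)
    (f : Y → EuclideanSpace ℝ (Fin κ)) (hfc : Continuous f)
    (hfb : Bornology.IsBounded (Set.range f)) (hsec : ∀ y : Y, π (f y) = y)

    (y : Y) (δ : ℝ) (hδ : 0 < δ) :
    ∀ s t : ℝ, s ∈ Set.Ioi δ → t ∈ Set.Ioi δ →
      |iQ Y π f t y - iQ Y π f s y| ≤
        (((⨆ z : Y, ⨆ j, f z j) - (⨅ z : Y, ⨆ j, f z j)) / δ) * |s - t| := by
  haveI : Nonempty Y := hY.to_subtype
  haveI : Nonempty (Fin κ) := ⟨⟨0, hκ⟩⟩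
  -- bound on coordinates
  obtain ⟨C, hC⟩ : ∃ C, ∀ z : Y, ‖f z‖ ≤ C := by
    obtain ⟨r, hr⟩ := hfb.subset_closedBall 0
    exact ⟨r, fun z => by simpa using hr (Set.mem_range_self z)⟩
  set g : Y → ℝ := fun z => ⨆ j, f z j with hg
  have hgC : ∀ z : Y, |g z| ≤ C := by
    intro z
    have h1 : g z ≤ C := ciSup_le fun j =>
      (abs_le.mp ((abs_coord_le_norm' (f z) j).trans (hC z))).2
    have h2 : -C ≤ g z := by
      refine le_trans ?_ (le_ciSup (Set.Finite.bddAbove (Set.finite_range _)) (⟨0, hκ⟩ : Fin κ))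
      exact (abs_le.mp ((abs_coord_le_norm' (f z) _).trans (hC z))).1
    rw [abs_le]; exact ⟨by linarith, h1⟩
  have hbddA : BddAbove (Set.range g) := ⟨C, by rintro _ ⟨z, rfl⟩; exact (abs_le.mp (hgC z)).2⟩
  have hbddB : BddBelow (Set.range g) := ⟨-C, by rintro _ ⟨z, rfl⟩; exact (abs_le.mp (hgC z)).1⟩
  set M : ℝ := ⨆ z : Y, g z with hM
  set m : ℝ := ⨅ z : Y, g z with hm
  have hgM : ∀ z : Y, g z ≤ M := fun z => le_ciSup hbddA z
  have hmg : ∀ z : Y, m ≤ g z := fun z => ciInf_le hbddB z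
  have hD : 0 ≤ M - m := by have := (hmg y).trans (hgM y); linarith
  -- basic facts about hlF
  have hlF_eq : ∀ (t : ℝ) (z : Y),
      hlF Y π f t y z = g z + (Metric.infDist (f z) (π ⁻¹' {y}))^2 / (2*t) := fun _ _ => rfl
  have hbddF : ∀ t : ℝ, 0 < t → BddBelow (Set.range fun z : Y => hlF Y π f t y z) := by
    intro t ht
    refine ⟨m, ?_⟩
    rintro _ ⟨z, rfl⟩
    show m ≤ hlF Y π f t y z
    rw [hlF_eq]
    have : 0 ≤ (Metric.infDist (f z) (π ⁻¹' {y}))^2 / (2*t) :=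
      div_nonneg (sq_nonneg _) (by linarith)
    linarith [hmg z]
  have hdisty : Metric.infDist (f y) (π ⁻¹' {y}) = 0 := by
    apply Metric.infDist_zero_of_mem
    simp [Set.mem_preimage, hsec y]
  have hiQleM : ∀ t : ℝ, 0 < t → iQ Y π f t y ≤ M := by
    intro t ht
    have h1 : iQ Y π f t y ≤ hlF Y π f t y y := ciInf_le (hbddF t ht) y
    rw [hlF_eq, hdisty] at h1
    calc iQ Y π f t y ≤ g y + 0^2/(2*t) := h1
      _ = g y := by ring
      _ ≤ M := hgM y
  -- monotonicity: s ≤ t implies iQ t ≤ iQ s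
  have hmono : ∀ s t : ℝ, 0 < s → s ≤ t → iQ Y π f t y ≤ iQ Y π f s y := by
    intro s t hs hst
    have ht : 0 < t := lt_of_lt_of_le hs hst
    refine le_ciInf fun z => ?_
    refine (ciInf_le (hbddF t ht) z).trans ?_
    rw [hlF_eq, hlF_eq]
    exact add_le_add_right
      (div_le_div_of_nonneg_left (sq_nonneg (Metric.infDist (f z) (π ⁻¹' {y}))) (by linarith) (by linarith)) _
  -- key Lipschitz estimate for s ≤ t
  have key : ∀ s t : ℝ, δ < s → s ≤ t →
      iQ Y π f s y - iQ Y π f t y ≤ (M - m)/δ * (t - s) := by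
    intro s t hδs hst
    have hs : 0 < s := hδ.trans hδs
    have ht : 0 < t := hs.trans_le hst
    refine sub_le_iff_le_add'.mpr (le_of_forall_pos_le_add fun ε hε => ?_)
    set c : ℝ := 1 + (t - s)/δ with hc
    have hcpos : 0 < c := by
      have : 0 ≤ (t - s)/δ := div_nonneg (by linarith) hδ.le
      simp only [hc]; linarith
    set ε₀ : ℝ := ε / c with hε₀
    have hε₀pos : 0 < ε₀ := div_pos hε hcpos
    obtain ⟨z, hz⟩ : ∃ z : Y, hlF Y π f t y z < iQ Y π f t y + ε₀ :=
      exists_lt_of_ciInf_lt (by simp only [iQ]; linarith)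
    set d2 : ℝ := (Metric.infDist (f z) (π ⁻¹' {y}))^2 with hd2def
    have hd2 : 0 ≤ d2 := sq_nonneg _
    have hB : g z + d2/(2*t) < iQ Y π f t y + ε₀ := by rw [hlF_eq] at hz; exact hz
    have hd2lt : d2 ≤ 2*t*((M - m) + ε₀) := by
      have h1 : d2/(2*t) < M + ε₀ - g z := by
        have := hiQleM t ht; linarith
      have h2 : d2/(2*t) ≤ (M - m) + ε₀ := by have := hmg z; linarith
      calc d2 = d2/(2*t) * (2*t) := by field_simp
        _ ≤ ((M - m) + ε₀) * (2*t) := by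
            apply mul_le_mul_of_nonneg_right h2; linarith
        _ = 2*t*((M - m) + ε₀) := by ring
    have hA : iQ Y π f s y ≤ g z + d2/(2*s) := by
      have := ciInf_le (hbddF s hs) z
      rwa [hlF_eq] at this
    have hCeq : d2/(2*s) - d2/(2*t) = d2 * (t - s) / (2*s*t) := by
      field_simp
    have hDk : d2 * (t - s) / (2*s*t) ≤ ((M - m) + ε₀) * (t - s) / δ := by
      rw [div_le_div_iff₀ (by positivity) hδ]
      have h1 : d2 * (t - s) ≤ 2*t*((M - m) + ε₀) * (t - s) :=
        mul_le_mul_of_nonneg_right hd2lt (by linarith)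
      have h2 : (0:ℝ) ≤ 2*t*((M - m) + ε₀)*(t - s) :=
        mul_nonneg (mul_nonneg (by linarith) (by linarith)) (by linarith)
      have hδs' : δ ≤ s := hδs.le
      nlinarith [mul_le_mul_of_nonneg_right h1 hδ.le,
        mul_le_mul_of_nonneg_left hδs' h2]
    have hE : ((M - m) + ε₀) * (t - s) / δ = (M - m)/δ * (t - s) + ε₀ * ((t - s)/δ) := by
      ring
    have hF : ε₀ + ε₀ * ((t - s)/δ) = ε := by
      have : ε₀ * c = ε := div_mul_cancel₀ ε hcpos.ne'
      calc ε₀ + ε₀ * ((t - s)/δ) = ε₀ * c := by rw [hc]; ring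
        _ = ε := this
    linarith
  -- conclude
  intro s t hs ht
  simp only [Set.mem_Ioi] at hs ht
  rcases le_total s t with hst | hst
  · have h1 := hmono s t (hδ.trans hs) hst
    have h2 := key s t hs hst
    rw [abs_of_nonpos (by linarith), abs_of_nonpos (by linarith)]
    calc -(iQ Y π f t y - iQ Y π f s y) = iQ Y π f s y - iQ Y π f t y := by ring
      _ ≤ (M - m)/δ * (t - s) := h2
      _ = (M - m)/δ * -(s - t) := by ring
  · have h1 := hmono t s (hδ.trans ht) hst
    have h2 := key t s ht hst
    rw [abs_of_nonneg (by linarith), abs_of_nonneg (by linarith)]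
    calc iQ Y π f t y - iQ Y π f s y ≤ (M - m)/δ * (s - t) := h2
      _ = (M - m)/δ * (s - t) := rfl
end

section
/- Let f be a bounded continuous section of π, let (y_n) be a sequence in Y converging to y ∈ Y, and let (t_n) ⊂ (0, ∞) converge to t > 0. Then iD⁻f(y, t) ≤ liminf_{n → ∞} iD⁻f(y_n, t_n). -/
open Metric Set Filter Topology MeasureTheory

/- ---------------- auxiliary lemmas ---------------- -/

section Aux

variable {κ : ℕ} {Y : Set (EuclideanSpace ℝ (Fin κ))}
  {π : EuclideanSpace ℝ (Fin κ) → Y} {f : Y → EuclideanSpace ℝ (Fin κ)}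

lemma aux_abs_coord (x : EuclideanSpace ℝ (Fin κ)) (j : Fin κ) : |x j| ≤ ‖x‖ := by
  rw [EuclideanSpace.norm_eq]
  have h1 : |x j| ^ 2 ≤ ∑ i, ‖x i‖ ^ 2 := by
    have := Finset.single_le_sum (f := fun i => ‖x i‖ ^ 2)
      (fun i _ => sq_nonneg _) (Finset.mem_univ j)
    simpa [Real.norm_eq_abs, sq_abs] using this
  calc |x j| = Real.sqrt (|x j| ^ 2) := by rw [Real.sqrt_sq (abs_nonneg _)]
  _ ≤ _ := Real.sqrt_le_sqrt h1

lemma aux_fiber_ne (hsec : ∀ y : Y, π (f y) = y) (y : Y) : (π ⁻¹' {y}).Nonempty :=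
  ⟨f y, by simp [hsec y]⟩

variable {M : ℝ} (hM : ∀ z : Y, ‖f z‖ ≤ M)
include hM

lemma aux_sup_le [Nonempty (Fin κ)] (z : Y) : (⨆ j, f z j) ≤ M :=
  ciSup_le fun j => le_trans (le_trans (le_abs_self _) (aux_abs_coord _ j)) (hM z)

lemma aux_neg_le_sup [Nonempty (Fin κ)] (z : Y) : -M ≤ ⨆ j, f z j := by
  have j : Fin κ := Classical.arbitrary _
  have h1 : -M ≤ f z j := (abs_le.1 ((aux_abs_coord (f z) j).trans (hM z))).1
  exact le_trans h1 (le_ciSup (Set.Finite.bddAbove (Set.finite_range _)) j)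

lemma aux_infDist_le (hsec : ∀ y : Y, π (f y) = y) (y z : Y) :
    Metric.infDist (f z) (π ⁻¹' {y}) ≤ M + M := by
  have h1 : Metric.infDist (f z) (π ⁻¹' {y}) ≤ dist (f z) (f y) :=
    Metric.infDist_le_dist_of_mem (by simp [hsec y])
  have h2 : dist (f z) (f y) ≤ ‖f z‖ + ‖f y‖ := by
    rw [dist_eq_norm]; exact (norm_sub_le _ _)
  exact h1.trans (h2.trans (add_le_add (hM z) (hM y)))

lemma aux_hlF_ge [Nonempty (Fin κ)] {t : ℝ} (ht : 0 < t) (y z : Y) :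
    -M ≤ hlF Y π f t y z := by
  have h1 := aux_neg_le_sup hM z
  have h2 : 0 ≤ (Metric.infDist (f z) (π ⁻¹' {y}))^2 / (2*t) := by positivity
  unfold hlF; linarith

lemma aux_bddBelow [Nonempty (Fin κ)] {t : ℝ} (ht : 0 < t) (y : Y) :
    BddBelow (Set.range fun z : Y => hlF Y π f t y z) :=
  ⟨-M, by rintro a ⟨z, rfl⟩; exact aux_hlF_ge hM ht y z⟩

lemma aux_iQ_le [Nonempty (Fin κ)] [Nonempty Y] {t : ℝ} (ht : 0 < t) (y z : Y) :
    iQ Y π f t y ≤ hlF Y π f t y z :=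
  ciInf_le (aux_bddBelow hM ht y) z

/-- existence of a minimizing sequence -/
lemma aux_exists_minSeq [Nonempty (Fin κ)] [Nonempty Y] {t : ℝ} (ht : 0 < t) (y : Y) :
    ∃ v : ℕ → Y, IsMinSeq Y π f t y v := by
  have h : ∀ k : ℕ, ∃ z : Y, hlF Y π f t y z < iQ Y π f t y + 1/(k+1 : ℝ) := by
    intro k
    apply exists_lt_of_ciInf_lt
    have : (0:ℝ) < 1/(k+1 : ℝ) := by positivity
    show iQ Y π f t y < _
    linarith
  choose v hv using h
  refine ⟨v, ?_⟩
  have h1 : Tendsto (fun k : ℕ => iQ Y π f t y + 1/(k+1 : ℝ)) atTop (nhds (iQ Y π f t y)) := by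
    have := tendsto_one_div_add_atTop_nhds_zero_nat (𝕜 := ℝ)
    simpa using tendsto_const_nhds.add this
  exact tendsto_of_tendsto_of_tendsto_of_le_of_le tendsto_const_nhds h1
    (fun k => aux_iQ_le hM ht y (v k)) (fun k => (hv k).le)

/-- elements of the defining set of `iDm` are in `[0, M+M]`, and the set is nonempty. -/
lemma aux_set_props [Nonempty (Fin κ)] [Nonempty Y] (hsec : ∀ y : Y, π (f y) = y)
    {t : ℝ} (ht : 0 < t) (y : Y) :
    { a : ℝ | ∃ u : ℕ → Y, IsMinSeq Y π f t y u ∧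
      a = Filter.liminf (fun n => Metric.infDist (f (u n)) (π ⁻¹' {y})) Filter.atTop }.Nonempty ∧
    (∀ a ∈ { a : ℝ | ∃ u : ℕ → Y, IsMinSeq Y π f t y u ∧
      a = Filter.liminf (fun n => Metric.infDist (f (u n)) (π ⁻¹' {y})) Filter.atTop },
      0 ≤ a ∧ a ≤ M + M) := by
  constructor
  · obtain ⟨v, hv⟩ := aux_exists_minSeq hM ht y
    exact ⟨_, v, hv, rfl⟩
  · rintro a ⟨v, hv, rfl⟩
    constructor
    · apply Filter.le_liminf_of_le
      · exact isCoboundedUnder_ge_of_le _ (fun n => aux_infDist_le hM hsec y (v n))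
      · exact Filter.Eventually.of_forall (fun n => Metric.infDist_nonneg)
    · apply Filter.liminf_le_of_le
      · exact ⟨0, Filter.eventually_map.2 (Filter.Eventually.of_forall
          (fun n => Metric.infDist_nonneg))⟩
      · intro b hb
        obtain ⟨n, hn⟩ := hb.exists
        exact hn.trans (aux_infDist_le hM hsec y (v n))

lemma aux_iDm_nonneg [Nonempty (Fin κ)] [Nonempty Y] (hsec : ∀ y : Y, π (f y) = y)
    {t : ℝ} (ht : 0 < t) (y : Y) : 0 ≤ iDm Y π f y t :=
  Real.sInf_nonneg (fun a ha => ((aux_set_props hM hsec ht y).2 a ha).1)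

lemma aux_iDm_le [Nonempty (Fin κ)] [Nonempty Y] (hsec : ∀ y : Y, π (f y) = y)
    {t : ℝ} (ht : 0 < t) (y : Y) : iDm Y π f y t ≤ M + M := by
  obtain ⟨⟨a, ha⟩, hb⟩ := aux_set_props hM hsec ht y
  exact le_trans (csInf_le ⟨0, fun x hx => (hb x hx).1⟩ ha) (hb a ha).2

end Aux

/- ---------------- main theorem ---------------- -/

set_option maxHeartbeats 2000000 in
theorem stmt_5 (κ : ℕ) (hκ : 1 ≤ κ)
    (Y : Set (EuclideanSpace ℝ (Fin κ))) (hY : Y.Nonempty) (hYb : Bornology.IsBounded Y)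
    (π : EuclideanSpace ℝ (Fin κ) → Y) (hπc : Continuous π) (hπo : IsOpenMap π)
    (hπs : Function.Surjective π)
    (f : Y → EuclideanSpace ℝ (Fin κ)) (hfc : Continuous f)
    (hfb : Bornology.IsBounded (Set.range f)) (hsec : ∀ y : Y, π (f y) = y)

    (u : ℕ → Y) (y : Y) (hu : Filter.Tendsto u Filter.atTop (nhds y))
    (ts : ℕ → ℝ) (hts : ∀ n, 0 < ts n) (t : ℝ) (ht : 0 < t)
    (htt : Filter.Tendsto ts Filter.atTop (nhds t)) :
    iDm Y π f y t ≤ Filter.liminf (fun n => iDm Y π f (u n) (ts n)) Filter.atTop := by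
  haveI : Nonempty Y := hY.to_subtype
  haveI : Nonempty (Fin κ) := ⟨⟨0, hκ⟩⟩
  obtain ⟨M0, hM0⟩ := isBounded_iff_forall_norm_le.1 hfb
  set M : ℝ := M0 + 1 with hMdef
  have hM : ∀ z : Y, ‖f z‖ ≤ M := fun z => by
    have := hM0 _ ⟨z, rfl⟩; simp only [hMdef]; linarith
  have hMpos : 0 < M := lt_of_le_of_lt (norm_nonneg (f (Classical.arbitrary Y)))
      (lt_of_le_of_lt (hM0 _ ⟨Classical.arbitrary Y, rfl⟩) (by simp [hMdef]))
  set L := Filter.liminf (fun n => iDm Y π f (u n) (ts n)) Filter.atTop with hLdef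
  show iDm Y π f y t ≤ L
  -- tendsto of 1/(2 ts n)
  have hinv : Tendsto (fun n => 1/(2 * ts n)) atTop (nhds (1/(2*t))) := by
    apply Tendsto.div tendsto_const_nhds ((tendsto_const_nhds.mul htt))
    positivity
  apply le_of_forall_pos_le_add
  intro ε hε
  -- core construction
  have core : ∀ σ > (0:ℝ), ∃ w : Y, hlF Y π f t y w ≤ iQ Y π f t y + σ ∧
      Metric.infDist (f w) (π ⁻¹' {y}) ≤ L + ε := by
    intro σ hσ
    set α : ℝ := 1/(2*t) with hα
    have hαpos : 0 < α := by positivity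
    set δ : ℝ := min 1 (min (ε/4) ((σ/4) / ((8*M+4) * α))) with hδdef
    have hδpos : 0 < δ := by
      apply lt_min one_pos (lt_min (by positivity) (by positivity))
    have hδ1 : δ ≤ 1 := min_le_left _ _
    have hδε : δ ≤ ε/4 := le_trans (min_le_right _ _) (min_le_left _ _)
    have hδσ : δ * ((8*M+4) * α) ≤ σ/4 := by
      have h1 : δ ≤ (σ/4) / ((8*M+4) * α) :=
        le_trans (min_le_right _ _) (min_le_right _ _)
      rw [le_div_iff₀ (by positivity)] at h1
      exact h1
    set δ' : ℝ := (σ/4) / (4*M^2+1) with hδ'def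
    have hδ'pos : 0 < δ' := by positivity
    have hδ'σ : 4*M^2 * δ' ≤ σ/4 := by
      rw [hδ'def, ← mul_div_assoc, div_le_iff₀ (by positivity)]
      nlinarith [sq_nonneg M, hσ.le]
    -- E1 : eventually iQ (u n) (ts n) ≤ iQ y t + σ/4
    have E1 : ∀ᶠ n in atTop, iQ Y π f (ts n) (u n) ≤ iQ Y π f t y + σ/4 := by
      obtain ⟨z, hz⟩ : ∃ z : Y, hlF Y π f t y z < iQ Y π f t y + σ/16 := by
        apply exists_lt_of_ciInf_lt
        show iQ Y π f t y < _
        linarith only [hσ]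
      set Dz : ℝ := Metric.infDist (f z) (π ⁻¹' {y}) with hDz
      have hDznn : 0 ≤ Dz := Metric.infDist_nonneg
      have hDzle : Dz ≤ M + M := aux_infDist_le hM hsec y z
      set ρ : ℝ := min 1 ((σ/16) / ((4*(2*M+1)) * α)) with hρdef
      have hρpos : 0 < ρ := lt_min one_pos (by positivity)
      have hρ1 : ρ ≤ 1 := min_le_left _ _
      have hρσ : ρ * ((4*(2*M+1)) * α) ≤ σ/16 := by
        have h1 : ρ ≤ (σ/16) / ((4*(2*M+1)) * α) := min_le_right _ _
        rw [le_div_iff₀ (by positivity)] at h1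
        exact h1
      obtain ⟨b, hbmem, hbd⟩ : ∃ b ∈ π ⁻¹' {y}, dist (f z) b < Dz + ρ := by
        apply (Metric.infDist_lt_iff (aux_fiber_ne hsec y)).1
        linarith only [hρpos]
      have hby : π b = y := hbmem
      have hopen : ∀ᶠ n in atTop, u n ∈ π '' (Metric.ball b ρ) := by
        apply hu.eventually
        apply (hπo _ Metric.isOpen_ball).mem_nhds
        exact ⟨b, Metric.mem_ball_self hρpos, hby⟩
      set ρ2 : ℝ := (σ/16) / ((2*M+2)^2+1) with hρ2def
      have hρ2pos : 0 < ρ2 := by positivity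
      have hρ2σ : (2*M+2)^2 * ρ2 ≤ σ/16 := by
        rw [hρ2def, ← mul_div_assoc, div_le_iff₀ (by positivity)]
        nlinarith [sq_nonneg (2*M+2), hσ.le]
      have hE3' : ∀ᶠ n in atTop, |1/(2* ts n) - 1/(2*t)| < ρ2 := by
        have := hinv.eventually (Metric.ball_mem_nhds (1/(2*t)) hρ2pos)
        simpa [Real.dist_eq] using this
      filter_upwards [hopen, hE3'] with n hn1 hn2
      obtain ⟨b', hb'ball, hb'eq⟩ := hn1
      have hdn : Metric.infDist (f z) (π ⁻¹' {u n}) ≤ Dz + 2*ρ := by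
        have h1 : Metric.infDist (f z) (π ⁻¹' {u n}) ≤ dist (f z) b' :=
          Metric.infDist_le_dist_of_mem (by simp [hb'eq])
        have h2 : dist (f z) b' ≤ dist (f z) b + dist b b' := dist_triangle _ _ _
        have h3 : dist b b' < ρ := by
          rw [dist_comm]; exact Metric.mem_ball.1 hb'ball
        linarith only [h1, h2, h3, hbd]
      have hiq : iQ Y π f (ts n) (u n) ≤ hlF Y π f (ts n) (u n) z :=
        aux_iQ_le hM (hts n) (u n) z
      have hdnn : 0 ≤ Metric.infDist (f z) (π ⁻¹' {u n}) := Metric.infDist_nonneg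
      set dn : ℝ := Metric.infDist (f z) (π ⁻¹' {u n}) with hdnd
      have hexp : hlF Y π f (ts n) (u n) z = (⨆ j, f z j) + dn^2 * (1/(2*ts n)) := by
        unfold hlF
        rw [div_eq_mul_inv, one_div, ← hdnd]
      have hexp2 : hlF Y π f t y z = (⨆ j, f z j) + Dz^2 * α := by
        unfold hlF
        rw [div_eq_mul_inv, hα, one_div, ← hDz]
      -- dn^2 * (1/(2 ts n)) ≤ dn^2 * α + (2M+2)^2 * ρ2
      have habs := abs_lt.1 hn2
      have hdnle : dn ≤ 2*M + 2 := by
        have h5 : Dz + 2*ρ ≤ (M+M) + 2 := by linarith only [hDzle, hρ1]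
        linarith only [hdn, h5]
      have h0 : 1/(2*ts n) ≤ α + ρ2 := by
        linarith only [habs.2, hα.le, hα.ge]
      have hdnsq : dn^2 ≤ (2*M+2)^2 := by
        rw [pow_two, pow_two]; exact mul_self_le_mul_self hdnn hdnle
      have hb1a : dn^2 * (1/(2*ts n)) ≤ dn^2 * (α + ρ2) :=
        mul_le_mul_of_nonneg_left h0 (sq_nonneg dn)
      have hb1b : dn^2 * ρ2 ≤ (2*M+2)^2 * ρ2 :=
        mul_le_mul_of_nonneg_right hdnsq hρ2pos.le
      have hb1 : dn^2 * (1/(2*ts n)) ≤ dn^2 * α + (2*M+2)^2 * ρ2 := by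
        rw [mul_add] at hb1a
        clear_value α δ δ' ρ ρ2 dn Dz M
        linarith only [hb1a, hb1b]
      have p1 : dn^2 ≤ (Dz+2*ρ)^2 := by
        rw [pow_two, pow_two]
        exact mul_le_mul hdn hdn hdnn (by linarith only [hDznn, hρpos.le])
      have p2 : ρ*Dz ≤ ρ*(M+M) := mul_le_mul_of_nonneg_left hDzle hρpos.le
      have p3 : ρ*ρ ≤ ρ*1 := mul_le_mul_of_nonneg_left hρ1 hρpos.le
      have e1 : (Dz+2*ρ)^2 = Dz^2 + 4*(ρ*Dz) + 4*(ρ*ρ) := by ring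
      have h4 : dn^2 ≤ Dz^2 + ρ * (4*(2*M+1)) := by
        linarith only [p1, p2, p3, e1.le, e1.ge]
      have q1 := mul_le_mul_of_nonneg_right h4 hαpos.le
      have e2 : (Dz^2 + ρ * (4*(2*M+1))) * α = Dz^2 * α + ρ * ((4*(2*M+1)) * α) := by
        ring
      have hb2 : dn^2 * α ≤ Dz^2 * α + ρ * ((4*(2*M+1)) * α) := by
        linarith only [q1, e2.le, e2.ge]
      have hfin := hiq
      rw [hexp] at hfin
      rw [hexp2] at hz
      clear_value α δ δ' ρ ρ2 dn Dz M
      linarith only [hfin, hz, hb1, hb2, hρσ, hρ2σ, hσ.le]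
    -- E2 : uniform fiber upper semicontinuity on a big ball
    have E2 : ∀ᶠ n in atTop, ∀ b : EuclideanSpace ℝ (Fin κ), ‖b‖ ≤ 3*M+1 →
        π b = u n → Metric.infDist b (π ⁻¹' {y}) ≤ δ := by
      set K : Set (EuclideanSpace ℝ (Fin κ)) := Metric.closedBall 0 (3*M+1) with hK
      set Cs : Set (EuclideanSpace ℝ (Fin κ)) :=
        K ∩ {b | δ ≤ Metric.infDist b (π ⁻¹' {y})} with hCs
      have hKc : IsCompact K := isCompact_closedBall _ _
      have hCc : IsCompact Cs := hKc.inter_right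
        (isClosed_le continuous_const (Metric.continuous_infDist_pt _))
      have himg : IsCompact (π '' Cs) := hCc.image hπc
      have hynot : y ∉ π '' Cs := by
        rintro ⟨b, ⟨hbK, hbd⟩, hbeq⟩
        have hbd' : δ ≤ Metric.infDist b (π ⁻¹' {y}) := hbd
        have h0 : Metric.infDist b (π ⁻¹' {y}) = 0 :=
          Metric.infDist_zero_of_mem (by simp [hbeq])
        rw [h0] at hbd'
        exact absurd hbd' (not_le.2 hδpos)
      have hev : ∀ᶠ n in atTop, u n ∈ (π '' Cs)ᶜ :=
        hu.eventually (himg.isClosed.isOpen_compl.mem_nhds hynot)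
      filter_upwards [hev] with n hn b hbn hbeq
      by_contra hcon
      push_neg at hcon
      apply hn
      exact ⟨b, ⟨Metric.mem_closedBall.2 (by simpa [dist_zero_right] using hbn), hcon.le⟩,
        hbeq⟩
    -- E3 : eventually |1/(2 ts n) - 1/(2t)| ≤ δ'
    have E3 : ∀ᶠ n in atTop, |1/(2*t) - 1/(2* ts n)| < δ' := by
      have := hinv.eventually (Metric.ball_mem_nhds (1/(2*t)) hδ'pos)
      simp only [Metric.mem_ball, Real.dist_eq] at this
      filter_upwards [this] with n hn
      rw [abs_sub_comm]; exact hn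
    -- F : frequently iDm < L + ε/2
    have hFb : ∀ n, iDm Y π f (u n) (ts n) ≤ M + M :=
      fun n => aux_iDm_le hM hsec (hts n) (u n)
    have hF : ∃ᶠ n in atTop, iDm Y π f (u n) (ts n) < L + ε/2 := by
      apply Filter.frequently_lt_of_liminf_lt
      · exact isCoboundedUnder_ge_of_le _ hFb
      · rw [← hLdef]; linarith only [hε]
    obtain ⟨n, ⟨hn1, hn2, hn3⟩, hn4⟩ := ((E1.and (E2.and E3)).and_frequently hF).exists
    -- get a minimizing sequence for (u n, ts n)
    obtain ⟨a, ⟨v, hvmin, haeq⟩, halt⟩ :=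
      exists_lt_of_csInf_lt ((aux_set_props hM hsec (hts n) (u n)).1) hn4
    have hfreq : ∃ᶠ m in atTop,
        Metric.infDist (f (v m)) (π ⁻¹' {u n}) < L + ε/2 := by
      apply Filter.frequently_lt_of_liminf_lt
      · exact isCoboundedUnder_ge_of_le _
          (fun m => aux_infDist_le hM hsec (u n) (v m))
      · rw [← haeq]; exact halt
    have hev2 : ∀ᶠ m in atTop,
        hlF Y π f (ts n) (u n) (v m) < iQ Y π f (ts n) (u n) + σ/4 :=
      hvmin.eventually_lt_const (by linarith only [hσ])
    obtain ⟨m, hm1, hm2⟩ := (hev2.and_frequently hfreq).exists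
    refine ⟨v m, ?_, ?_⟩
    · -- hlF bound
      set d0 : ℝ := Metric.infDist (f (v m)) (π ⁻¹' {u n}) with hd0
      have hd0nn : 0 ≤ d0 := Metric.infDist_nonneg
      have hd0le : d0 ≤ M + M := aux_infDist_le hM hsec (u n) (v m)
      obtain ⟨b, hbmem, hbd⟩ : ∃ b ∈ π ⁻¹' {u n}, dist (f (v m)) b < d0 + δ := by
        apply (Metric.infDist_lt_iff (aux_fiber_ne hsec (u n))).1
        linarith only [hδpos]
      have hbnorm : ‖b‖ ≤ 3*M+1 := by
        have h1 : ‖b‖ - ‖f (v m)‖ ≤ ‖b - f (v m)‖ := norm_sub_norm_le _ _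
        have h2 : ‖b - f (v m)‖ = dist (f (v m)) b := by
          rw [dist_eq_norm, norm_sub_rev]
        have h3 := hM (v m)
        linarith only [h1, h2.le, h2.ge, h3, hbd, hd0le, hδ1]
      have hbfib : Metric.infDist b (π ⁻¹' {y}) ≤ δ := hn2 b hbnorm hbmem
      have hD : Metric.infDist (f (v m)) (π ⁻¹' {y}) ≤ d0 + 2*δ := by
        have h5 := Metric.infDist_le_infDist_add_dist
          (x := f (v m)) (y := b) (s := π ⁻¹' {y})
        linarith only [h5, hbfib, hbd]
      set D : ℝ := Metric.infDist (f (v m)) (π ⁻¹' {y}) with hDd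
      have hDnn : 0 ≤ D := Metric.infDist_nonneg
      have hexp : hlF Y π f t y (v m) = (⨆ j, f (v m) j) + D^2 * α := by
        unfold hlF; rw [div_eq_mul_inv, hα, one_div, ← hDd]
      have hexp2 : hlF Y π f (ts n) (u n) (v m)
          = (⨆ j, f (v m) j) + d0^2 * (1/(2*ts n)) := by
        unfold hlF; rw [div_eq_mul_inv, one_div, ← hd0]
      have p1 : D^2 ≤ (d0+2*δ)^2 := by
        rw [pow_two, pow_two]
        exact mul_le_mul hD hD hDnn (by linarith only [hd0nn, hδpos.le])
      have p2 : δ*d0 ≤ δ*(M+M) := mul_le_mul_of_nonneg_left hd0le hδpos.le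
      have p3 : δ*δ ≤ δ*1 := mul_le_mul_of_nonneg_left hδ1 hδpos.le
      have e1 : (d0+2*δ)^2 = d0^2 + 4*(δ*d0) + 4*(δ*δ) := by ring
      have h1 : D^2 ≤ d0^2 + δ * (8*M+4) := by
        linarith only [p1, p2, p3, e1.le, e1.ge]
      have q1 := mul_le_mul_of_nonneg_right h1 hαpos.le
      have e2 : (d0^2 + δ * (8*M+4)) * α = d0^2 * α + δ * ((8*M+4) * α) := by ring
      have h2 : D^2 * α ≤ d0^2 * α + δ * ((8*M+4) * α) := by
        linarith only [q1, e2.le, e2.ge]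
      have habs := abs_lt.1 hn3
      have h0 : α ≤ 1/(2*ts n) + δ' := by
        linarith only [habs.2, hα.le, hα.ge]
      have hd0sq : d0^2 ≤ 4*M^2 := by
        have h6 : d0^2 ≤ (M+M)^2 := by
          rw [pow_two, pow_two]; exact mul_self_le_mul_self hd0nn hd0le
        have e3 : (M+M)^2 = 4*M^2 := by ring
        linarith only [h6, e3.le, e3.ge]
      have p4 : d0^2 * α ≤ d0^2 * (1/(2*ts n) + δ') :=
        mul_le_mul_of_nonneg_left h0 (sq_nonneg d0)
      have p5 : d0^2 * δ' ≤ 4*M^2 * δ' := mul_le_mul_of_nonneg_right hd0sq hδ'pos.le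
      have h3 : d0^2 * α ≤ d0^2 * (1/(2*ts n)) + 4*M^2 * δ' := by
        rw [mul_add] at p4
        clear_value α δ δ' d0 D M
        linarith only [p4, p5]
      rw [hexp]
      rw [hexp2] at hm1
      clear_value α δ δ' d0 D M
      linarith only [hm1, hn1, h2, h3, hδσ, hδ'σ]
    · -- infDist bound
      set d0 : ℝ := Metric.infDist (f (v m)) (π ⁻¹' {u n}) with hd0
      have hd0nn : 0 ≤ d0 := Metric.infDist_nonneg
      obtain ⟨b, hbmem, hbd⟩ : ∃ b ∈ π ⁻¹' {u n}, dist (f (v m)) b < d0 + δ := by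
        apply (Metric.infDist_lt_iff (aux_fiber_ne hsec (u n))).1
        linarith only [hδpos]
      have hbnorm : ‖b‖ ≤ 3*M+1 := by
        have h1 : ‖b‖ - ‖f (v m)‖ ≤ ‖b - f (v m)‖ := norm_sub_norm_le _ _
        have h2 : ‖b - f (v m)‖ = dist (f (v m)) b := by
          rw [dist_eq_norm, norm_sub_rev]
        have h3 := hM (v m)
        have h4 : d0 ≤ M + M := aux_infDist_le hM hsec (u n) (v m)
        linarith only [h1, h2.le, h2.ge, h3, h4, hbd, hδ1]
      have hbfib : Metric.infDist b (π ⁻¹' {y}) ≤ δ := hn2 b hbnorm hbmem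
      have hD : Metric.infDist (f (v m)) (π ⁻¹' {y}) ≤ d0 + 2*δ := by
        have h5 := Metric.infDist_le_infDist_add_dist
          (x := f (v m)) (y := b) (s := π ⁻¹' {y})
        linarith only [h5, hbfib, hbd]
      linarith only [hD, hm2, hδε]
  -- use core to build a minimizing sequence for (y, t)
  have hW : ∀ k : ℕ, ∃ w : Y, hlF Y π f t y w ≤ iQ Y π f t y + 1/(k+1 : ℝ) ∧
      Metric.infDist (f w) (π ⁻¹' {y}) ≤ L + ε := by
    intro k
    exact core (1/(k+1 : ℝ)) (by positivity)
  choose W hW1 hW2 using hW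
  have hWmin : IsMinSeq Y π f t y W := by
    have h1 : Tendsto (fun k : ℕ => iQ Y π f t y + 1/(k+1 : ℝ)) atTop
        (nhds (iQ Y π f t y)) := by
      have := tendsto_one_div_add_atTop_nhds_zero_nat (𝕜 := ℝ)
      simpa using tendsto_const_nhds.add this
    exact tendsto_of_tendsto_of_tendsto_of_le_of_le tendsto_const_nhds h1
      (fun k => aux_iQ_le hM ht y (W k)) hW1
  have hmem : Filter.liminf (fun k => Metric.infDist (f (W k)) (π ⁻¹' {y})) atTop ∈
      { a : ℝ | ∃ v : ℕ → Y, IsMinSeq Y π f t y v ∧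
        a = Filter.liminf (fun n => Metric.infDist (f (v n)) (π ⁻¹' {y})) Filter.atTop } :=
    ⟨W, hWmin, rfl⟩
  have hle : iDm Y π f y t ≤
      Filter.liminf (fun k => Metric.infDist (f (W k)) (π ⁻¹' {y})) atTop := by
    apply csInf_le _ hmem
    exact ⟨0, fun a ha => ((aux_set_props hM hsec ht y).2 a ha).1⟩
  have hlim : Filter.liminf (fun k => Metric.infDist (f (W k)) (π ⁻¹' {y})) atTop
      ≤ L + ε := by
    apply Filter.liminf_le_of_le
    · exact ⟨0, Filter.eventually_map.2 (Filter.Eventually.of_forall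
        (fun k => Metric.infDist_nonneg))⟩
    · intro b hb
      obtain ⟨k, hk⟩ := hb.exists
      exact hk.trans (hW2 k)
  linarith only [hle, hlim]
end

section
/- For every bounded continuous section f of π and every y ∈ Y, the map t ↦ iD⁻f(y, t) is left continuous on (0, ∞) and the map t ↦ iD⁺f(y, t) is right continuous on (0, ∞). -/
open Metric Set Filter Topology MeasureTheory
set_option linter.unusedSectionVars false
set_option linter.unusedVariables false

section Abstract
variable {ι : Type*} [Nonempty ι]

noncomputable def aF (a c : ι → ℝ) (t : ℝ) (z : ι) : ℝ := a z + (c z)^2 / (2*t)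
noncomputable def aQ (a c : ι → ℝ) (t : ℝ) : ℝ := ⨅ z, aF a c t z
def aMS (a c : ι → ℝ) (t : ℝ) (u : ℕ → ι) : Prop :=
  Filter.Tendsto (fun n => aF a c t (u n)) Filter.atTop (nhds (aQ a c t))
noncomputable def aDm (a c : ι → ℝ) (t : ℝ) : ℝ :=
  sInf { x : ℝ | ∃ u : ℕ → ι, aMS a c t u ∧ x = Filter.liminf (fun n => c (u n)) Filter.atTop }
noncomputable def aDp (a c : ι → ℝ) (t : ℝ) : ℝ :=
  sSup { x : ℝ | ∃ u : ℕ → ι, aMS a c t u ∧ x = Filter.limsup (fun n => c (u n)) Filter.atTop }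

variable {a c : ι → ℝ} {A C : ℝ}

/-- helper: sqrt subadditive -/
lemma my_sqrt_add_le {x y : ℝ} (hy : 0 ≤ y) :
    Real.sqrt (x + y) ≤ Real.sqrt x + Real.sqrt y := by
  rcases le_or_gt 0 x with hx | hx
  · have h1 : x + y ≤ (Real.sqrt x + Real.sqrt y)^2 := by
      have := Real.sq_sqrt hx
      have := Real.sq_sqrt hy
      have := Real.sqrt_nonneg x
      have := Real.sqrt_nonneg y
      nlinarith [mul_nonneg (Real.sqrt_nonneg x) (Real.sqrt_nonneg y)]
    calc Real.sqrt (x + y) ≤ Real.sqrt ((Real.sqrt x + Real.sqrt y)^2) := Real.sqrt_le_sqrt h1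
    _ = Real.sqrt x + Real.sqrt y :=
      Real.sqrt_sq (by positivity)
  · calc Real.sqrt (x + y) ≤ Real.sqrt y := Real.sqrt_le_sqrt (by linarith)
    _ ≤ Real.sqrt x + Real.sqrt y := by linarith [Real.sqrt_nonneg x]

section hyp
variable (hA : ∀ z, |a z| ≤ A) (hc0 : ∀ z, 0 ≤ c z) (hcC : ∀ z, c z ≤ C)

include hA hc0 in
lemma aF_bdd (t : ℝ) (ht : 0 < t) : BddBelow (Set.range (aF a c t)) := by
  refine ⟨-A, ?_⟩
  rintro x ⟨z, rfl⟩
  have h1 : 0 ≤ (c z)^2 / (2*t) := by positivity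
  have := abs_le.1 (hA z)
  simp only [aF]
  linarith [this.1]

include hA hc0 in
lemma aQ_le (t : ℝ) (ht : 0 < t) (z : ι) : aQ a c t ≤ aF a c t z :=
  ciInf_le (aF_bdd hA hc0 t ht) z

include hA hc0 in
lemma aQ_anti {t s : ℝ} (ht : 0 < t) (hts : t ≤ s) : aQ a c s ≤ aQ a c t := by
  refine le_ciInf fun z => le_trans (aQ_le hA hc0 s (ht.trans_le hts) z) ?_
  have : (c z)^2 / (2*s) ≤ (c z)^2 / (2*t) := by
    have h2t : (0:ℝ) < 2*t := by linarith
    exact div_le_div_of_nonneg_left (by positivity) h2t (by linarith)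
  simp only [aF]; linarith

include hA hc0 hcC in
lemma aQ_lip {t s : ℝ} (ht : 0 < t) (hts : t ≤ s) :
    aQ a c t ≤ aQ a c s + C^2/2 * (1/t - 1/s) := by
  have hs : 0 < s := ht.trans_le hts
  have key : ∀ z, aQ a c t - C^2/2 * (1/t - 1/s) ≤ aF a c s z := by
    intro z
    have h1 : aQ a c t ≤ aF a c t z := aQ_le hA hc0 t ht z
    have h2 : aF a c t z = aF a c s z + (c z)^2/2 * (1/t - 1/s) := by
      simp only [aF]; field_simp; ring
    have h3 : (c z)^2/2 * (1/t - 1/s) ≤ C^2/2 * (1/t - 1/s) := by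
      have hf : 0 ≤ 1/t - 1/s := by
        have : 1/s ≤ 1/t := by gcongr
        linarith
      have hcc : (c z)^2 ≤ C^2 := by
        have := hc0 z; have := hcC z; nlinarith
      nlinarith
    linarith
  have := le_ciInf key
  simp only [aQ] at *
  linarith

include hA hc0 in
lemma exists_lt_aF (t : ℝ) (ht : 0 < t) {ε : ℝ} (hε : 0 < ε) :
    ∃ z, aF a c t z < aQ a c t + ε :=
  exists_lt_of_ciInf_lt (by linarith : aQ a c t < aQ a c t + ε)

end hyp

/-- generic liminf/limsup helpers for real sequences -/
lemma my_limsup_le {w v : ℕ → ℝ} {L B : ℝ} (hb : ∀ n, B ≤ w n)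
    (h : ∀ n, w n ≤ v n) (hv : Filter.Tendsto v Filter.atTop (nhds L)) :
    Filter.limsup w Filter.atTop ≤ L := by
  have h1 : Filter.limsup w Filter.atTop ≤ Filter.limsup v Filter.atTop := by
    refine Filter.limsup_le_limsup (Filter.Eventually.of_forall h) ?_ hv.isBoundedUnder_le
    exact (Filter.isBoundedUnder_of ⟨B, hb⟩).isCoboundedUnder_le
  rwa [hv.limsup_eq] at h1

lemma my_le_liminf {w v : ℕ → ℝ} {L B : ℝ} (hb : ∀ n, w n ≤ B)
    (h : ∀ n, v n ≤ w n) (hv : Filter.Tendsto v Filter.atTop (nhds L)) :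
    L ≤ Filter.liminf w Filter.atTop := by
  have h1 : Filter.liminf v Filter.atTop ≤ Filter.liminf w Filter.atTop := by
    refine Filter.liminf_le_liminf (Filter.Eventually.of_forall h) hv.isBoundedUnder_ge ?_
    exact (Filter.isBoundedUnder_of ⟨B, hb⟩).isCoboundedUnder_ge
  rwa [hv.liminf_eq] at h1

lemma my_liminf_le_limsup {w : ℕ → ℝ} {B B' : ℝ} (hb : ∀ n, B' ≤ w n) (hb' : ∀ n, w n ≤ B) :
    Filter.liminf w Filter.atTop ≤ Filter.limsup w Filter.atTop :=
  Filter.liminf_le_limsup (Filter.isBoundedUnder_of ⟨B, hb'⟩) (Filter.isBoundedUnder_of ⟨B', hb⟩)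

section hyp2
variable (hA : ∀ z, |a z| ≤ A) (hc0 : ∀ z, 0 ≤ c z) (hcC : ∀ z, c z ≤ C)

include hA hc0 in
lemma exists_aMS (t : ℝ) (ht : 0 < t) : ∃ u : ℕ → ι, aMS a c t u := by
  have h : ∀ n : ℕ, ∃ z, aF a c t z < aQ a c t + 1/(n+1) := fun n =>
    exists_lt_aF hA hc0 t ht (by positivity)
  refine ⟨fun n => (h n).choose, ?_⟩
  have hup : ∀ n : ℕ, aF a c t ((h n).choose) ≤ aQ a c t + 1/(n+1) :=
    fun n => (h n).choose_spec.le
  have hlo : ∀ n : ℕ, aQ a c t ≤ aF a c t ((h n).choose) := fun n => aQ_le hA hc0 t ht _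
  refine tendsto_of_tendsto_of_tendsto_of_le_of_le tendsto_const_nhds ?_ hlo hup
  have : Filter.Tendsto (fun n : ℕ => 1 / ((n : ℝ) + 1)) Filter.atTop (nhds 0) :=
    tendsto_one_div_add_atTop_nhds_zero_nat
  have h2 : Filter.Tendsto (fun n : ℕ => aQ a c t + 1/(n+1)) Filter.atTop
      (nhds (aQ a c t + 0)) := tendsto_const_nhds.add this
  simpa using h2

/-- the slope quantity -/
noncomputable def asig (a c : ι → ℝ) (x y : ℝ) : ℝ :=
  Real.sqrt ((aQ a c x - aQ a c y) / (1/(2*x) - 1/(2*y)))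

include hA hc0 in
lemma asig_nonneg (x y : ℝ) : 0 ≤ asig a c x y := Real.sqrt_nonneg _

include hA hc0 hcC in
lemma limsup_le_asig {x y : ℝ} (hx : 0 < x) (hxy : x < y) {u : ℕ → ι}
    (hu : aMS a c x u) :
    Filter.limsup (fun n => c (u n)) Filter.atTop ≤ asig a c x y := by
  have hy : 0 < y := hx.trans hxy
  have hδ : 0 < 1/(2*x) - 1/(2*y) := by
    have : 1/(2*y) < 1/(2*x) := by
      apply one_div_lt_one_div_of_lt <;> linarith
    linarith
  set δ := 1/(2*x) - 1/(2*y) with hδdef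
  have key : ∀ n, c (u n) ≤ Real.sqrt ((aF a c x (u n) - aQ a c y) / δ) := by
    intro n
    have h1 : aQ a c y ≤ aF a c y (u n) := aQ_le hA hc0 y hy _
    have h2 : aF a c x (u n) = aF a c y (u n) + (c (u n))^2 * δ := by
      simp only [aF, hδdef]; field_simp; ring
    have h3 : (c (u n))^2 ≤ (aF a c x (u n) - aQ a c y) / δ := by
      rw [le_div_iff₀ hδ]; nlinarith
    calc c (u n) = Real.sqrt ((c (u n))^2) := (Real.sqrt_sq (hc0 _)).symm
    _ ≤ _ := Real.sqrt_le_sqrt h3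
  refine my_limsup_le (fun n => hc0 (u n)) key ?_
  have h4 : Filter.Tendsto (fun n => (aF a c x (u n) - aQ a c y) / δ) Filter.atTop
      (nhds ((aQ a c x - aQ a c y) / δ)) := (hu.sub_const _).div_const _
  exact (Real.continuous_sqrt.tendsto _).comp h4

include hA hc0 hcC in
lemma asig_le_liminf {x y : ℝ} (hx : 0 < x) (hxy : x < y) {u : ℕ → ι}
    (hu : aMS a c y u) :
    asig a c x y ≤ Filter.liminf (fun n => c (u n)) Filter.atTop := by
  have hy : 0 < y := hx.trans hxy
  have hδ : 0 < 1/(2*x) - 1/(2*y) := by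
    have : 1/(2*y) < 1/(2*x) := by
      apply one_div_lt_one_div_of_lt <;> linarith
    linarith
  set δ := 1/(2*x) - 1/(2*y) with hδdef
  have key : ∀ n, Real.sqrt ((aQ a c x - aF a c y (u n)) / δ) ≤ c (u n) := by
    intro n
    have h1 : aQ a c x ≤ aF a c x (u n) := aQ_le hA hc0 x hx _
    have h2 : aF a c x (u n) = aF a c y (u n) + (c (u n))^2 * δ := by
      simp only [aF, hδdef]; field_simp; ring
    have h3 : (aQ a c x - aF a c y (u n)) / δ ≤ (c (u n))^2 := by
      rw [div_le_iff₀ hδ]; nlinarith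
    calc Real.sqrt ((aQ a c x - aF a c y (u n)) / δ) ≤ Real.sqrt ((c (u n))^2) :=
      Real.sqrt_le_sqrt h3
    _ = c (u n) := Real.sqrt_sq (hc0 _)
  refine my_le_liminf (fun n => hcC (u n)) key ?_
  have h4 : Filter.Tendsto (fun n => (aQ a c x - aF a c y (u n)) / δ) Filter.atTop
      (nhds ((aQ a c x - aQ a c y) / δ)) := ((tendsto_const_nhds.sub hu).div_const _)
  exact (Real.continuous_sqrt.tendsto _).comp h4

end hyp2


section hyp3
variable (hA : ∀ z, |a z| ≤ A) (hc0 : ∀ z, 0 ≤ c z) (hcC : ∀ z, c z ≤ C)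

include hc0 hcC in
lemma aDm_set_subset (t : ℝ) :
    { x : ℝ | ∃ u : ℕ → ι, aMS a c t u ∧ x = Filter.liminf (fun n => c (u n)) Filter.atTop }
      ⊆ Set.Icc 0 C := by
  rintro x ⟨u, hu, rfl⟩
  constructor
  · exact my_le_liminf (fun n => hcC (u n)) (fun n => hc0 (u n)) tendsto_const_nhds
  · calc Filter.liminf (fun n => c (u n)) Filter.atTop
        ≤ Filter.limsup (fun n => c (u n)) Filter.atTop :=
          my_liminf_le_limsup (fun n => hc0 (u n)) (fun n => hcC (u n))
    _ ≤ C := my_limsup_le (fun n => hc0 (u n)) (fun n => hcC (u n)) tendsto_const_nhds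

include hc0 hcC in
lemma aDp_set_subset (t : ℝ) :
    { x : ℝ | ∃ u : ℕ → ι, aMS a c t u ∧ x = Filter.limsup (fun n => c (u n)) Filter.atTop }
      ⊆ Set.Icc 0 C := by
  rintro x ⟨u, hu, rfl⟩
  constructor
  · calc (0:ℝ) ≤ Filter.liminf (fun n => c (u n)) Filter.atTop :=
        my_le_liminf (fun n => hcC (u n)) (fun n => hc0 (u n)) tendsto_const_nhds
    _ ≤ _ := my_liminf_le_limsup (fun n => hc0 (u n)) (fun n => hcC (u n))
  · exact my_limsup_le (fun n => hc0 (u n)) (fun n => hcC (u n)) tendsto_const_nhds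

include hA hc0 in
lemma aDm_set_nonempty (t : ℝ) (ht : 0 < t) :
    { x : ℝ | ∃ u : ℕ → ι, aMS a c t u ∧ x = Filter.liminf (fun n => c (u n)) Filter.atTop
      }.Nonempty := by
  obtain ⟨u, hu⟩ := exists_aMS hA hc0 t ht
  exact ⟨_, u, hu, rfl⟩

include hA hc0 in
lemma aDp_set_nonempty (t : ℝ) (ht : 0 < t) :
    { x : ℝ | ∃ u : ℕ → ι, aMS a c t u ∧ x = Filter.limsup (fun n => c (u n)) Filter.atTop
      }.Nonempty := by
  obtain ⟨u, hu⟩ := exists_aMS hA hc0 t ht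
  exact ⟨_, u, hu, rfl⟩

include hA hc0 hcC in
lemma aDp_le_asig {x y : ℝ} (hx : 0 < x) (hxy : x < y) : aDp a c x ≤ asig a c x y := by
  refine csSup_le (aDp_set_nonempty hA hc0 x hx) ?_
  rintro b ⟨u, hu, rfl⟩
  exact limsup_le_asig hA hc0 hcC hx hxy hu

include hA hc0 hcC in
lemma asig_le_aDm {x y : ℝ} (hx : 0 < x) (hxy : x < y) : asig a c x y ≤ aDm a c y := by
  refine le_csInf (aDm_set_nonempty hA hc0 y (hx.trans hxy)) ?_
  rintro b ⟨u, hu, rfl⟩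
  exact asig_le_liminf hA hc0 hcC hx hxy hu

include hA hc0 hcC in
lemma aDm_le_aDp (t : ℝ) (ht : 0 < t) : aDm a c t ≤ aDp a c t := by
  obtain ⟨u, hu⟩ := exists_aMS hA hc0 t ht
  calc aDm a c t ≤ Filter.liminf (fun n => c (u n)) Filter.atTop :=
    csInf_le ⟨0, fun b hb => (aDm_set_subset hc0 hcC t hb).1⟩ ⟨u, hu, rfl⟩
  _ ≤ Filter.limsup (fun n => c (u n)) Filter.atTop :=
    my_liminf_le_limsup (fun n => hc0 (u n)) (fun n => hcC (u n))
  _ ≤ aDp a c t := le_csSup ⟨C, fun b hb => (aDp_set_subset hc0 hcC t hb).2⟩ ⟨u, hu, rfl⟩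

include hA hc0 hcC in
lemma aDm_mono {x y : ℝ} (hx : 0 < x) (hxy : x < y) : aDm a c x ≤ aDm a c y :=
  le_trans (aDm_le_aDp hA hc0 hcC x hx)
    (le_trans (aDp_le_asig hA hc0 hcC hx hxy) (asig_le_aDm hA hc0 hcC hx hxy))

include hA hc0 hcC in
lemma aDp_mono {x y : ℝ} (hx : 0 < x) (hxy : x < y) : aDp a c x ≤ aDp a c y :=
  le_trans (aDp_le_asig hA hc0 hcC hx hxy)
    (le_trans (asig_le_aDm hA hc0 hcC hx hxy) (aDm_le_aDp hA hc0 hcC y (hx.trans hxy)))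

include hA hc0 hcC in
lemma aQ_abs_sub {s t : ℝ} (hs : 0 < s) (ht : 0 < t) :
    |aQ a c s - aQ a c t| ≤ C^2/2 * |1/s - 1/t| := by
  rcases le_total s t with h | h
  · have h1 := aQ_anti hA hc0 hs h
    have h2 := aQ_lip hA hc0 hcC hs h
    have h3 : 1/t ≤ 1/s := by gcongr
    rw [abs_of_nonneg (by linarith), abs_of_nonneg (by linarith)]
    linarith
  · have h1 := aQ_anti hA hc0 ht h
    have h2 := aQ_lip hA hc0 hcC ht h
    have h3 : 1/s ≤ 1/t := by gcongr
    rw [abs_of_nonpos (by linarith), abs_of_nonpos (by linarith)]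
    linarith

include hA hc0 hcC in
lemma aQ_contAt {t : ℝ} (ht : 0 < t) : ContinuousAt (aQ a c) t := by
  rw [Metric.continuousAt_iff]
  intro ε hε
  have h1 : ContinuousAt (fun s : ℝ => C^2/2 * |1/s - 1/t|) t := by
    have : ContinuousAt (fun s : ℝ => 1/s) t := by
      simpa only [one_div] using (continuousAt_inv₀ (ne_of_gt ht))
    exact continuousAt_const.mul ((this.sub continuousAt_const).abs)
  have h2 : Filter.Tendsto (fun s : ℝ => C^2/2 * |1/s - 1/t|) (nhds t)
      (nhds 0) := by
    have := h1.tendsto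
    simpa using this
  rw [Metric.tendsto_nhds_nhds] at h2
  obtain ⟨δ, hδ, hδ2⟩ := h2 (ε/2) (by linarith)
  refine ⟨min δ (t/2), by positivity, fun {s} hst => ?_⟩
  have hs : 0 < s := by
    have := abs_lt.1 (lt_of_lt_of_le hst (min_le_right _ _))
    rw [Real.dist_eq] at *
    have := abs_lt.1 (lt_of_lt_of_le hst (min_le_right _ _))
    linarith
  have := hδ2 (lt_of_lt_of_le hst (min_le_left _ _))
  rw [Real.dist_eq] at *
  have h3 := aQ_abs_sub hA hc0 hcC hs ht
  have h4 : |C^2/2 * |1/s - 1/t| - 0| = C^2/2 * |1/s - 1/t| := by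
    rw [sub_zero, abs_of_nonneg (by positivity)]
  rw [h4] at this
  linarith

include hA hc0 hcC in
lemma asig_contAt_right {x t : ℝ} (hx : 0 < x) (ht : 0 < t) (hne : 1/(2*x) - 1/(2*t) ≠ 0) :
    ContinuousAt (fun y => asig a c x y) t := by
  apply Real.continuous_sqrt.continuousAt.comp
  apply ContinuousAt.div
  · exact continuousAt_const.sub (aQ_contAt hA hc0 hcC ht)
  · refine continuousAt_const.sub ?_
    have : ContinuousAt (fun y : ℝ => 2*y) t := continuousAt_const.mul continuousAt_id
    have h2 : ContinuousAt (fun w : ℝ => 1/w) (2*t) := by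
      simpa only [one_div] using (continuousAt_inv₀ (by positivity : (2:ℝ)*t ≠ 0))
    exact h2.comp this
  · exact hne

include hA hc0 hcC in
lemma asig_contAt_left {y t : ℝ} (hy : 0 < y) (ht : 0 < t) (hne : 1/(2*t) - 1/(2*y) ≠ 0) :
    ContinuousAt (fun x => asig a c x y) t := by
  apply Real.continuous_sqrt.continuousAt.comp
  apply ContinuousAt.div
  · exact (aQ_contAt hA hc0 hcC ht).sub continuousAt_const
  · refine ContinuousAt.sub ?_ continuousAt_const
    have : ContinuousAt (fun x : ℝ => 2*x) t := continuousAt_const.mul continuousAt_id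
    have h2 : ContinuousAt (fun w : ℝ => 1/w) (2*t) := by
      simpa only [one_div] using (continuousAt_inv₀ (by positivity : (2:ℝ)*t ≠ 0))
    exact h2.comp this
  · exact hne

end hyp3


section hyp4
variable (hA : ∀ z, |a z| ≤ A) (hc0 : ∀ z, 0 ≤ c z) (hcC : ∀ z, c z ≤ C)

include hA hc0 hcC in
lemma aDm_approx_left {t : ℝ} (ht : 0 < t) {ε : ℝ} (hε : 0 < ε) :
    ∃ s, 0 < s ∧ s < t ∧ aDm a c t - ε ≤ aDm a c s := by
  obtain ⟨r, hr⟩ : ∃ r : ℕ → ℝ, r = fun m : ℕ => t - t/((m:ℝ)+2) := ⟨_, rfl⟩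
  have hrpos : ∀ m, 0 < r m := by
    intro m; simp only [hr]
    have h1 : t/((m:ℝ)+2) < t := by
      rw [div_lt_iff₀ (by positivity)]
      nlinarith [Nat.cast_nonneg (α := ℝ) m]
    linarith
  have hrlt : ∀ m, r m < t := by
    intro m; simp only [hr]
    have : 0 < t/((m:ℝ)+2) := by positivity
    linarith
  obtain ⟨δ, hδdef⟩ : ∃ δ : ℕ → ℝ, δ = fun m => 1/(2*(r m)) - 1/(2*t) := ⟨_, rfl⟩
  have hδpos : ∀ m, 0 < δ m := by
    intro m
    have h1 := hrpos m; have h2 := hrlt m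
    have : 1/(2*t) < 1/(2*(r m)) := by
      apply one_div_lt_one_div_of_lt <;> linarith
    simp only [hδdef]; linarith
  have hz : ∀ m : ℕ, ∃ z, aF a c (r m) z < aQ a c (r m) + δ m / (m+1) := by
    intro m
    exact exists_lt_aF hA hc0 (r m) (hrpos m) (div_pos (hδpos m) (by positivity))
  obtain ⟨z, hzs⟩ : ∃ z : ℕ → ι, ∀ m, aF a c (r m) (z m) < aQ a c (r m) + δ m/(m+1) :=
    ⟨fun m => (hz m).choose, fun m => (hz m).choose_spec⟩
  -- r → t  and δ → 0
  have hm2 : Filter.Tendsto (fun m : ℕ => ((m:ℝ)+2)⁻¹) Filter.atTop (nhds 0) :=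
    tendsto_inv_atTop_zero.comp
      (Filter.tendsto_atTop_add_const_right Filter.atTop (2:ℝ) tendsto_natCast_atTop_atTop)
  have hrt : Filter.Tendsto r Filter.atTop (nhds t) := by
    have h1 : Filter.Tendsto (fun m : ℕ => t * ((m:ℝ)+2)⁻¹) Filter.atTop (nhds (t * 0)) :=
      tendsto_const_nhds.mul hm2
    have h2 : Filter.Tendsto (fun m : ℕ => t - t * ((m:ℝ)+2)⁻¹) Filter.atTop (nhds (t - t*0)) :=
      tendsto_const_nhds.sub h1
    simp only [mul_zero, sub_zero] at h2
    have he : (fun m : ℕ => t - t * ((m:ℝ)+2)⁻¹) = r := by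
      funext m; simp only [hr]; rw [div_eq_mul_inv]
    rwa [he] at h2
  have hδ0 : Filter.Tendsto δ Filter.atTop (nhds 0) := by
    have hcont : ContinuousAt (fun w : ℝ => 1/(2*w)) t := by
      have h2 : ContinuousAt (fun w : ℝ => 1/w) (2*t) := by
        simpa only [one_div] using (continuousAt_inv₀ (by positivity : (2:ℝ)*t ≠ 0))
      exact h2.comp (continuousAt_const.mul continuousAt_id)
    have h1 : Filter.Tendsto (fun m => 1/(2*(r m))) Filter.atTop (nhds (1/(2*t))) :=
      hcont.tendsto.comp hrt
    have h2 := h1.sub (tendsto_const_nhds : Filter.Tendsto (fun _ : ℕ => 1/(2*t)) Filter.atTop _)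
    rw [sub_self] at h2
    rw [hδdef]
    exact h2
  -- z is a minimizing sequence at t
  have haF : ∀ m, aF a c t (z m) = aF a c (r m) (z m) - (c (z m))^2 * δ m := by
    intro m
    simp only [aF, hδdef]
    ring
  have hup : ∀ m, aF a c t (z m) ≤ aQ a c t + (C^2+1) * δ m := by
    intro m
    have h2 := haF m
    have h3 : 0 ≤ (c (z m))^2 * δ m := by
      have := hδpos m; have := hc0 (z m); positivity
    have h4 : aQ a c (r m) ≤ aQ a c t + C^2/2 * (1/(r m) - 1/t) :=
      aQ_lip hA hc0 hcC (hrpos m) (hrlt m).le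
    have h5 : 1/(r m) - 1/t = 2 * δ m := by
      simp only [hδdef]
      have h1 : r m ≠ 0 := (hrpos m).ne'
      have h2' : t ≠ 0 := ht.ne'
      field_simp
    have h6 : δ m/(m+1) ≤ δ m := by
      apply div_le_self (hδpos m).le
      have : (0:ℝ) ≤ (m:ℝ) := Nat.cast_nonneg m
      linarith
    have h7 := hzs m
    rw [h5] at h4
    have h8 : (C^2+1)*δ m = C^2/2*(2*δ m) + δ m := by ring
    linarith
  have hMS : aMS a c t z := by
    have hlo : ∀ m, aQ a c t ≤ aF a c t (z m) := fun m => aQ_le hA hc0 t ht _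
    refine tendsto_of_tendsto_of_tendsto_of_le_of_le tendsto_const_nhds ?_ hlo hup
    have h1 : Filter.Tendsto (fun m => aQ a c t + (C^2+1) * δ m) Filter.atTop
        (nhds (aQ a c t + (C^2+1) * 0)) := tendsto_const_nhds.add (tendsto_const_nhds.mul hδ0)
    simpa using h1
  -- bound on c (z m)
  have hcb : ∀ m, c (z m) ≤ asig a c (r m) t + Real.sqrt (1/(m+1)) := by
    intro m
    have h2 := haF m
    have h1 : aQ a c t ≤ aF a c t (z m) := aQ_le hA hc0 t ht _
    have h3 : (c (z m))^2 * δ m ≤ aQ a c (r m) + δ m/(m+1) - aQ a c t := by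
      have := hzs m; linarith
    have hd := hδpos m
    have h4 : (c (z m))^2 ≤ (aQ a c (r m) - aQ a c t)/(δ m) + 1/(m+1) := by
      have e : ((aQ a c (r m) - aQ a c t)/δ m + 1/((m:ℝ)+1)) * δ m
          = (aQ a c (r m) - aQ a c t) + δ m/((m:ℝ)+1) := by
        rw [add_mul, div_mul_cancel₀ _ (ne_of_gt hd)]
        ring
      refine (mul_le_mul_iff_left₀ hd).1 ?_
      rw [e]
      linarith
    have h5 : (asig a c (r m) t)^2 = (aQ a c (r m) - aQ a c t)/(δ m) := by
      have h6 : aQ a c t ≤ aQ a c (r m) := aQ_anti hA hc0 (hrpos m) (hrlt m).le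
      have e2 : (aQ a c (r m) - aQ a c t) / (1/(2*(r m)) - 1/(2*t))
          = (aQ a c (r m) - aQ a c t)/(δ m) := by simp only [hδdef]
      simp only [asig]
      rw [e2]
      exact Real.sq_sqrt (div_nonneg (by linarith) hd.le)
    calc c (z m) = Real.sqrt ((c (z m))^2) := (Real.sqrt_sq (hc0 _)).symm
    _ ≤ Real.sqrt ((asig a c (r m) t)^2 + 1/(m+1)) := by
        apply Real.sqrt_le_sqrt; rw [h5]; exact h4
    _ ≤ Real.sqrt ((asig a c (r m) t)^2) + Real.sqrt (1/(m+1)) :=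
        my_sqrt_add_le (by positivity)
    _ = asig a c (r m) t + Real.sqrt (1/(m+1)) := by
        rw [Real.sqrt_sq (show (0:ℝ) ≤ asig a c (r m) t from Real.sqrt_nonneg _)]
  -- liminf bound
  have hDm : aDm a c t ≤ Filter.liminf (fun m => c (z m)) Filter.atTop :=
    csInf_le ⟨0, fun b hb => (aDm_set_subset hc0 hcC t hb).1⟩ ⟨z, hMS, rfl⟩
  have E1 : ∀ᶠ m in Filter.atTop, aDm a c t - ε/2 < c (z m) := by
    refine Filter.eventually_lt_of_lt_liminf (lt_of_lt_of_le (by linarith) hDm) ?_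
    exact Filter.isBoundedUnder_of ⟨0, fun n => hc0 (z n)⟩
  have E2 : ∀ᶠ m : ℕ in Filter.atTop, Real.sqrt (1/(m+1)) < ε/2 := by
    have h1 : Filter.Tendsto (fun m : ℕ => Real.sqrt (1/(m+1))) Filter.atTop
        (nhds (Real.sqrt 0)) :=
      (Real.continuous_sqrt.tendsto 0).comp tendsto_one_div_add_atTop_nhds_zero_nat
    rw [Real.sqrt_zero] at h1
    exact h1.eventually_lt_const (by linarith)
  obtain ⟨m, hm1, hm2'⟩ := (E1.and E2).exists
  have hσ : aDm a c t - ε < asig a c (r m) t := by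
    have := hcb m; linarith
  -- pick s close to t from the left
  have hcont : ContinuousAt (fun s => asig a c (r m) s) t := by
    refine asig_contAt_right hA hc0 hcC (hrpos m) ht ?_
    have := hδpos m
    simp only [hδdef] at this
    exact this.ne'
  have tend : Filter.Tendsto (fun s => asig a c (r m) s) (nhdsWithin t (Set.Iio t))
      (nhds (asig a c (r m) t)) := hcont.tendsto.mono_left nhdsWithin_le_nhds
  have Ev1 : ∀ᶠ s in nhdsWithin t (Set.Iio t), aDm a c t - ε < asig a c (r m) s :=
    tend.eventually_const_lt hσ
  have Ev2 : ∀ᶠ s in nhdsWithin t (Set.Iio t), r m < s :=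
    ((isOpen_Ioi.eventually_mem (hrlt m)).filter_mono nhdsWithin_le_nhds)
  have Ev3 : ∀ᶠ s in nhdsWithin t (Set.Iio t), s < t := eventually_mem_nhdsWithin
  obtain ⟨s, hs1, hs2, hs3⟩ := (Ev1.and (Ev2.and Ev3)).exists
  refine ⟨s, (hrpos m).trans hs2, hs3, ?_⟩
  have := asig_le_aDm hA hc0 hcC (hrpos m) hs2
  linarith

include hA hc0 hcC in
lemma aDp_approx_right {t : ℝ} (ht : 0 < t) {ε : ℝ} (hε : 0 < ε) :
    ∃ s, t < s ∧ aDp a c s ≤ aDp a c t + ε := by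
  obtain ⟨r, hr⟩ : ∃ r : ℕ → ℝ, r = fun m : ℕ => t + t/((m:ℝ)+2) := ⟨_, rfl⟩
  have hrgt : ∀ m, t < r m := by
    intro m; simp only [hr]
    have : 0 < t/((m:ℝ)+2) := by positivity
    linarith
  have hrpos : ∀ m, 0 < r m := fun m => ht.trans (hrgt m)
  obtain ⟨δ, hδdef⟩ : ∃ δ : ℕ → ℝ, δ = fun m => 1/(2*t) - 1/(2*(r m)) := ⟨_, rfl⟩
  have hδpos : ∀ m, 0 < δ m := by
    intro m
    have h1 := hrpos m; have h2 := hrgt m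
    have : 1/(2*(r m)) < 1/(2*t) := by
      apply one_div_lt_one_div_of_lt <;> linarith
    simp only [hδdef]; linarith
  have hz : ∀ m : ℕ, ∃ z, aF a c (r m) z < aQ a c (r m) + δ m / (m+1) := by
    intro m
    exact exists_lt_aF hA hc0 (r m) (hrpos m) (div_pos (hδpos m) (by positivity))
  obtain ⟨z, hzs⟩ : ∃ z : ℕ → ι, ∀ m, aF a c (r m) (z m) < aQ a c (r m) + δ m/(m+1) :=
    ⟨fun m => (hz m).choose, fun m => (hz m).choose_spec⟩
  -- r → t  and δ → 0
  have hm2 : Filter.Tendsto (fun m : ℕ => ((m:ℝ)+2)⁻¹) Filter.atTop (nhds 0) :=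
    tendsto_inv_atTop_zero.comp
      (Filter.tendsto_atTop_add_const_right Filter.atTop (2:ℝ) tendsto_natCast_atTop_atTop)
  have hrt : Filter.Tendsto r Filter.atTop (nhds t) := by
    have h1 : Filter.Tendsto (fun m : ℕ => t * ((m:ℝ)+2)⁻¹) Filter.atTop (nhds (t * 0)) :=
      tendsto_const_nhds.mul hm2
    have h2 : Filter.Tendsto (fun m : ℕ => t + t * ((m:ℝ)+2)⁻¹) Filter.atTop (nhds (t + t*0)) :=
      tendsto_const_nhds.add h1
    simp only [mul_zero, add_zero] at h2
    have he : (fun m : ℕ => t + t * ((m:ℝ)+2)⁻¹) = r := by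
      funext m; simp only [hr]; rw [div_eq_mul_inv]
    rwa [he] at h2
  have hδ0 : Filter.Tendsto δ Filter.atTop (nhds 0) := by
    have hcont : ContinuousAt (fun w : ℝ => 1/(2*w)) t := by
      have h2 : ContinuousAt (fun w : ℝ => 1/w) (2*t) := by
        simpa only [one_div] using (continuousAt_inv₀ (by positivity : (2:ℝ)*t ≠ 0))
      exact h2.comp (continuousAt_const.mul continuousAt_id)
    have h1 : Filter.Tendsto (fun m => 1/(2*(r m))) Filter.atTop (nhds (1/(2*t))) :=
      hcont.tendsto.comp hrt
    have h2 := (tendsto_const_nhds : Filter.Tendsto (fun _ : ℕ => 1/(2*t))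
      Filter.atTop _).sub h1
    rw [sub_self] at h2
    rw [hδdef]
    exact h2
  have haF : ∀ m, aF a c t (z m) = aF a c (r m) (z m) + (c (z m))^2 * δ m := by
    intro m
    simp only [aF, hδdef]
    ring
  have hup : ∀ m, aF a c t (z m) ≤ aQ a c t + (C^2+1) * δ m := by
    intro m
    have h2 := haF m
    have h3 : (c (z m))^2 * δ m ≤ C^2 * δ m := by
      have h3a := hδpos m
      have h3b := hc0 (z m); have h3c := hcC (z m)
      have : (c (z m))^2 ≤ C^2 := by nlinarith
      nlinarith
    have h4 : aQ a c (r m) ≤ aQ a c t := aQ_anti hA hc0 ht (hrgt m).le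
    have h6 : δ m/(m+1) ≤ δ m := by
      apply div_le_self (hδpos m).le
      have : (0:ℝ) ≤ (m:ℝ) := Nat.cast_nonneg m
      linarith
    have h7 := hzs m
    have h8 : (C^2+1)*δ m = C^2*δ m + δ m := by ring
    linarith
  have hMS : aMS a c t z := by
    have hlo : ∀ m, aQ a c t ≤ aF a c t (z m) := fun m => aQ_le hA hc0 t ht _
    refine tendsto_of_tendsto_of_tendsto_of_le_of_le tendsto_const_nhds ?_ hlo hup
    have h1 : Filter.Tendsto (fun m => aQ a c t + (C^2+1) * δ m) Filter.atTop
        (nhds (aQ a c t + (C^2+1) * 0)) := tendsto_const_nhds.add (tendsto_const_nhds.mul hδ0)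
    simpa using h1
  -- lower bound on c (z m)
  have hcb : ∀ m, asig a c t (r m) ≤ c (z m) + Real.sqrt (1/(m+1)) := by
    intro m
    have h2 := haF m
    have h1 : aQ a c t ≤ aF a c t (z m) := aQ_le hA hc0 t ht _
    have h3 : aQ a c t - aQ a c (r m) - δ m/(m+1) ≤ (c (z m))^2 * δ m := by
      have := hzs m; linarith
    have hd := hδpos m
    have h4 : (aQ a c t - aQ a c (r m))/(δ m) - 1/(m+1) ≤ (c (z m))^2 := by
      have e : ((aQ a c t - aQ a c (r m))/δ m - 1/((m:ℝ)+1)) * δ m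
          = (aQ a c t - aQ a c (r m)) - δ m/((m:ℝ)+1) := by
        rw [sub_mul, div_mul_cancel₀ _ (ne_of_gt hd)]
        ring
      refine (mul_le_mul_iff_left₀ hd).1 ?_
      rw [e]
      linarith
    have h5 : (asig a c t (r m))^2 = (aQ a c t - aQ a c (r m))/(δ m) := by
      have h6 : aQ a c (r m) ≤ aQ a c t := aQ_anti hA hc0 ht (hrgt m).le
      have e2 : (aQ a c t - aQ a c (r m)) / (1/(2*t) - 1/(2*(r m)))
          = (aQ a c t - aQ a c (r m))/(δ m) := by simp only [hδdef]
      simp only [asig]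
      rw [e2]
      exact Real.sq_sqrt (div_nonneg (by linarith) hd.le)
    calc asig a c t (r m)
        = Real.sqrt ((asig a c t (r m))^2) :=
          (Real.sqrt_sq (show (0:ℝ) ≤ asig a c t (r m) from Real.sqrt_nonneg _)).symm
    _ = Real.sqrt (((asig a c t (r m))^2 - 1/(m+1)) + 1/(m+1)) := by ring_nf
    _ ≤ Real.sqrt ((asig a c t (r m))^2 - 1/(m+1)) + Real.sqrt (1/(m+1)) :=
        my_sqrt_add_le (by positivity)
    _ ≤ c (z m) + Real.sqrt (1/(m+1)) := by
        have h7 : (asig a c t (r m))^2 - 1/(m+1) ≤ (c (z m))^2 := by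
          rw [h5]; linarith
        have := Real.sqrt_le_sqrt h7
        rw [Real.sqrt_sq (hc0 (z m))] at this
        linarith
  -- limsup bound
  have hDp : Filter.limsup (fun m => c (z m)) Filter.atTop ≤ aDp a c t :=
    le_csSup ⟨C, fun b hb => (aDp_set_subset hc0 hcC t hb).2⟩ ⟨z, hMS, rfl⟩
  have E1 : ∀ᶠ m in Filter.atTop, c (z m) < aDp a c t + ε/2 := by
    refine Filter.eventually_lt_of_limsup_lt (lt_of_le_of_lt hDp (by linarith)) ?_
    exact Filter.isBoundedUnder_of ⟨C, fun n => hcC (z n)⟩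
  have E2 : ∀ᶠ m : ℕ in Filter.atTop, Real.sqrt (1/(m+1)) < ε/2 := by
    have h1 : Filter.Tendsto (fun m : ℕ => Real.sqrt (1/(m+1))) Filter.atTop
        (nhds (Real.sqrt 0)) :=
      (Real.continuous_sqrt.tendsto 0).comp tendsto_one_div_add_atTop_nhds_zero_nat
    rw [Real.sqrt_zero] at h1
    exact h1.eventually_lt_const (by linarith)
  obtain ⟨m, hm1, hm2'⟩ := (E1.and E2).exists
  have hσ : asig a c t (r m) < aDp a c t + ε := by
    have := hcb m; linarith
  -- pick s close to t from the right
  have hcont : ContinuousAt (fun s => asig a c s (r m)) t := by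
    refine asig_contAt_left hA hc0 hcC (hrpos m) ht ?_
    have := hδpos m
    simp only [hδdef] at this
    exact this.ne'
  have tend : Filter.Tendsto (fun s => asig a c s (r m)) (nhdsWithin t (Set.Ioi t))
      (nhds (asig a c t (r m))) := hcont.tendsto.mono_left nhdsWithin_le_nhds
  have Ev1 : ∀ᶠ s in nhdsWithin t (Set.Ioi t), asig a c s (r m) < aDp a c t + ε :=
    tend.eventually_lt_const hσ
  have Ev2 : ∀ᶠ s in nhdsWithin t (Set.Ioi t), s < r m :=
    ((isOpen_Iio.eventually_mem (hrgt m)).filter_mono nhdsWithin_le_nhds)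
  have Ev3 : ∀ᶠ s in nhdsWithin t (Set.Ioi t), t < s := eventually_mem_nhdsWithin
  obtain ⟨s, hs1, hs2, hs3⟩ := (Ev1.and (Ev2.and Ev3)).exists
  refine ⟨s, hs3, ?_⟩
  have := aDp_le_asig hA hc0 hcC (ht.trans hs3) hs2
  linarith

include hA hc0 hcC in
lemma aDm_tendsto_left {t : ℝ} (ht : 0 < t) :
    Filter.Tendsto (fun s => aDm a c s) (nhdsWithin t (Set.Ioo 0 t)) (nhds (aDm a c t)) := by
  rw [Metric.tendsto_nhdsWithin_nhds]
  intro ε hε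
  obtain ⟨s₀, hs₀pos, hs₀lt, hs₀⟩ := aDm_approx_left hA hc0 hcC ht (show (0:ℝ) < ε/2 by linarith)
  refine ⟨t - s₀, by linarith, ?_⟩
  intro s hs hdist
  rw [Real.dist_eq] at hdist ⊢
  obtain ⟨hs0, hst⟩ := hs
  have h1 : s₀ < s := by
    have := (abs_lt.1 hdist).1
    linarith
  have h2 : aDm a c s₀ ≤ aDm a c s := aDm_mono hA hc0 hcC hs₀pos h1
  have h3 : aDm a c s ≤ aDm a c t := aDm_mono hA hc0 hcC hs0 hst
  rw [abs_of_nonpos (by linarith)]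
  linarith

include hA hc0 hcC in
lemma aDp_tendsto_right {t : ℝ} (ht : 0 < t) :
    Filter.Tendsto (fun s => aDp a c s) (nhdsWithin t (Set.Ioi t)) (nhds (aDp a c t)) := by
  rw [Metric.tendsto_nhdsWithin_nhds]
  intro ε hε
  obtain ⟨s₀, hs₀gt, hs₀⟩ := aDp_approx_right hA hc0 hcC ht (show (0:ℝ) < ε/2 by linarith)
  refine ⟨s₀ - t, by linarith, ?_⟩
  intro s hs hdist
  rw [Real.dist_eq] at hdist ⊢
  rw [Set.mem_Ioi] at hs
  have h1 : s < s₀ := by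
    have := (abs_lt.1 hdist).2
    linarith
  have h2 : aDp a c s ≤ aDp a c s₀ := aDp_mono hA hc0 hcC (ht.trans hs) h1
  have h3 : aDp a c t ≤ aDp a c s := aDp_mono hA hc0 hcC ht hs
  rw [abs_of_nonneg (by linarith)]
  linarith

end hyp4


end Abstract


theorem stmt_7 (κ : ℕ) (hκ : 1 ≤ κ)
    (Y : Set (EuclideanSpace ℝ (Fin κ))) (hY : Y.Nonempty) (hYb : Bornology.IsBounded Y)
    (π : EuclideanSpace ℝ (Fin κ) → Y) (hπc : Continuous π) (hπo : IsOpenMap π)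
    (hπs : Function.Surjective π)
    (f : Y → EuclideanSpace ℝ (Fin κ)) (hfc : Continuous f)
    (hfb : Bornology.IsBounded (Set.range f)) (hsec : ∀ y : Y, π (f y) = y)

    (y : Y) :
    (∀ t : ℝ, 0 < t →
      Filter.Tendsto (fun s => iDm Y π f y s) (nhdsWithin t (Set.Ioo 0 t))
        (nhds (iDm Y π f y t))) ∧
    (∀ t : ℝ, 0 < t →
      Filter.Tendsto (fun s => iDp Y π f y s) (nhdsWithin t (Set.Ioi t))
        (nhds (iDp Y π f y t))) := by
  have hne : Nonempty Y := hY.to_subtype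
  have hFinNe : Nonempty (Fin κ) := ⟨⟨0, hκ⟩⟩
  obtain ⟨R, hR⟩ := isBounded_iff_forall_norm_le.1 hfb
  have hcoord : ∀ (x : EuclideanSpace ℝ (Fin κ)) (j : Fin κ), |x j| ≤ ‖x‖ := by
    intro x j
    rw [EuclideanSpace.norm_eq]
    have h1 : |x j| = Real.sqrt (‖x j‖^2) := by
      rw [Real.sqrt_sq (norm_nonneg _), Real.norm_eq_abs]
    rw [h1]
    apply Real.sqrt_le_sqrt
    exact Finset.single_le_sum (f := fun i => ‖x i‖^2) (fun i _ => by positivity) (Finset.mem_univ j)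
  set a : Y → ℝ := fun z => ⨆ j, f z j with ha
  set c : Y → ℝ := fun z => Metric.infDist (f z) (π ⁻¹' {y}) with hc
  have hRnn : 0 ≤ R := le_trans (norm_nonneg _) (hR (f y) (Set.mem_range_self y))
  have hA : ∀ z, |a z| ≤ R := by
    intro z
    have hnorm : ‖f z‖ ≤ R := hR (f z) (Set.mem_range_self z)
    rw [abs_le]
    constructor
    · have h1 : f z ⟨0, hκ⟩ ≤ a z :=
        le_ciSup (Set.Finite.bddAbove (Set.finite_range _)) (⟨0, hκ⟩ : Fin κ)
      have h2 := hcoord (f z) ⟨0, hκ⟩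
      have h3 := abs_le.1 h2
      linarith [h3.1]
    · refine ciSup_le fun j => ?_
      have h2 := hcoord (f z) j
      have h3 := abs_le.1 h2
      linarith [h3.2]
  have hc0 : ∀ z, 0 ≤ c z := fun z => Metric.infDist_nonneg
  have hmemy : f y ∈ π ⁻¹' {y} := by
    simp only [Set.mem_preimage, Set.mem_singleton_iff, hsec]
  have hcC : ∀ z, c z ≤ 2*R := by
    intro z
    have h1 : c z ≤ dist (f z) (f y) := Metric.infDist_le_dist_of_mem hmemy
    have h2 : dist (f z) (f y) ≤ ‖f z‖ + ‖f y‖ := dist_le_norm_add_norm _ _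
    have h3 : ‖f z‖ ≤ R := hR (f z) (Set.mem_range_self z)
    have h4 : ‖f y‖ ≤ R := hR (f y) (Set.mem_range_self y)
    linarith
  have eDm : (fun s => iDm Y π f y s) = fun s => aDm a c s := rfl
  have eDp : (fun s => iDp Y π f y s) = fun s => aDp a c s := rfl
  constructor
  · intro t ht
    rw [eDm, show iDm Y π f y t = aDm a c t from rfl]
    exact aDm_tendsto_left hA hc0 hcC ht
  · intro t ht
    rw [eDp, show iDp Y π f y t = aDp a c t from rfl]
    exact aDp_tendsto_right hA hc0 hcC ht
end

section
/- For every bounded continuous section f of π, every y ∈ Y and every t > 0, the right derivative of s ↦ iQ_s f(y) at t exists and equals −(iD⁺f(y, t))²/(2t²), i.e. lim_{s → t⁺} (iQ_s f(y) − iQ_t f(y))/(s − t) = −(iD⁺f(y, t))²/(2t²). -/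
open Metric Set Filter Topology MeasureTheory

set_option maxHeartbeats 1600000

lemma sq_csSup_le_aux {S : Set ℝ} (hne : S.Nonempty) (hbdd : BddAbove S)
    (hpos : ∀ a ∈ S, 0 ≤ a) {c x : ℝ} (hc : 0 ≤ c)
    (h : ∀ a ∈ S, c * a ^ 2 ≤ x) : c * (sSup S) ^ 2 ≤ x := by
  set q : ℝ → ℝ := fun r => c * (max r 0) ^ 2 with hq
  have hmono : Monotone q := by
    intro a b hab
    dsimp only [q]
    have h0 : (0:ℝ) ≤ max a 0 := le_max_right _ _
    exact mul_le_mul_of_nonneg_left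
      (pow_le_pow_left₀ h0 (max_le_max hab le_rfl) 2) hc
  have hcont : ContinuousAt q (sSup S) := by fun_prop
  have hmap := hmono.map_csSup_of_continuousAt hcont hne hbdd
  obtain ⟨a0, ha0⟩ := hne
  have hsup0 : 0 ≤ sSup S := le_trans (hpos a0 ha0) (le_csSup hbdd ha0)
  have h1 : q (sSup S) = c * (sSup S) ^ 2 := by
    simp only [q, max_eq_left hsup0]
  rw [← h1, hmap]
  apply csSup_le (Set.Nonempty.image q ⟨a0, ha0⟩)
  rintro b ⟨a, ha, rfl⟩
  have : q a = c * a ^ 2 := by simp only [q, max_eq_left (hpos a ha)]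
  rw [this]; exact h a ha

theorem stmt_10 (κ : ℕ) (hκ : 1 ≤ κ)
    (Y : Set (EuclideanSpace ℝ (Fin κ))) (hY : Y.Nonempty) (hYb : Bornology.IsBounded Y)
    (π : EuclideanSpace ℝ (Fin κ) → Y) (hπc : Continuous π) (hπo : IsOpenMap π)
    (hπs : Function.Surjective π)
    (f : Y → EuclideanSpace ℝ (Fin κ)) (hfc : Continuous f)
    (hfb : Bornology.IsBounded (Set.range f)) (hsec : ∀ y : Y, π (f y) = y)

    (y : Y) (t : ℝ) (ht : 0 < t) :
    HasDerivWithinAt (fun s => iQ Y π f s y)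
      (-(iDp Y π f y t)^2 / (2*t^2)) (Set.Ioi t) t := by
  classical
  haveI : Nonempty Y := hY.to_subtype
  haveI : Nonempty (Fin κ) := ⟨⟨0, hκ⟩⟩
  -- a uniform norm bound on f
  obtain ⟨R, hR⟩ : ∃ R : ℝ, ∀ z : Y, ‖f z‖ ≤ R := by
    obtain ⟨R, hR⟩ := isBounded_iff_forall_norm_le.mp hfb
    exact ⟨R, fun z => hR _ (Set.mem_range_self z)⟩
  have hR0 : 0 ≤ R := le_trans (norm_nonneg _) (hR (Classical.arbitrary Y))
  -- coordinates are bounded by the norm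
  have hcoord : ∀ (x : EuclideanSpace ℝ (Fin κ)) (j : Fin κ), |x j| ≤ ‖x‖ := by
    intro x j
    rw [EuclideanSpace.norm_eq, ← Real.sqrt_sq_eq_abs]
    apply Real.sqrt_le_sqrt
    have := Finset.single_le_sum (f := fun i => ‖x i‖ ^ 2)
      (fun i _ => sq_nonneg _) (Finset.mem_univ j)
    simpa [Real.norm_eq_abs, sq_abs] using this
  set g : Y → ℝ := fun z => ⨆ j, f z j with hgdef
  set D : Y → ℝ := fun z => Metric.infDist (f z) (π ⁻¹' {y}) with hDdef
  have hgle : ∀ z, g z ≤ R := fun z =>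
    ciSup_le fun j => le_trans (le_abs_self _) (le_trans (hcoord _ j) (hR z))
  have hgge : ∀ z, -R ≤ g z := by
    intro z
    have h1 : f z ⟨0, hκ⟩ ≤ g z :=
      le_ciSup (f := fun j => f z j) (Set.Finite.bddAbove (Set.finite_range _))
        (⟨0, hκ⟩ : Fin κ)
    have h2 : |f z ⟨0, hκ⟩| ≤ R := le_trans (hcoord _ _) (hR z)
    have := abs_le.mp h2
    linarith [this.1]
  have hfy : f y ∈ π ⁻¹' {y} := by
    simp only [Set.mem_preimage, Set.mem_singleton_iff, hsec y]
  have hD0 : ∀ z, 0 ≤ D z := fun z => Metric.infDist_nonneg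
  set C : ℝ := 2 * R with hCdef
  have hC0 : 0 ≤ C := by positivity
  have hDC : ∀ z, D z ≤ C := by
    intro z
    refine le_trans (Metric.infDist_le_dist_of_mem hfy) ?_
    calc dist (f z) (f y) ≤ ‖f z‖ + ‖f y‖ := dist_le_norm_add_norm _ _
      _ ≤ C := by rw [hCdef]; linarith [hR z, hR y]
  have hlFeq : ∀ (s : ℝ) (z : Y), hlF Y π f s y z = g z + (D z)^2 / (2*s) :=
    fun _ _ => rfl
  have hbddb : ∀ s : ℝ, 0 < s → BddBelow (Set.range fun z : Y => hlF Y π f s y z) := by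
    intro s hs
    refine ⟨-R, ?_⟩
    rintro x ⟨z, rfl⟩
    show -R ≤ hlF Y π f s y z
    rw [hlFeq]
    have : 0 ≤ (D z)^2 / (2*s) := by positivity
    linarith [hgge z]
  have hiQ_le : ∀ s : ℝ, 0 < s → ∀ z : Y, iQ Y π f s y ≤ hlF Y π f s y z := by
    intro s hs z
    exact ciInf_le (hbddb s hs) z
  have hiQ_mono : ∀ s₁ s₂ : ℝ, 0 < s₁ → s₁ ≤ s₂ → iQ Y π f s₂ y ≤ iQ Y π f s₁ y := by
    intro s₁ s₂ hs₁ h12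
    show (⨅ z : Y, hlF Y π f s₂ y z) ≤ ⨅ z : Y, hlF Y π f s₁ y z
    apply ciInf_mono (hbddb s₂ (lt_of_lt_of_le hs₁ h12))
    intro z
    rw [hlFeq, hlFeq]
    have h2s : (0:ℝ) < 2*s₁ := by linarith
    gcongr
  -- existence of minimizing sequences
  have hminseq : ∀ s : ℝ, 0 < s → ∃ u : ℕ → Y, IsMinSeq Y π f s y u ∧
      ∀ n : ℕ, hlF Y π f s y (u n) < iQ Y π f s y + 1/((n:ℝ)+1) := by
    intro s hs
    have hchoice : ∀ n : ℕ, ∃ z : Y, hlF Y π f s y z < iQ Y π f s y + 1/((n:ℝ)+1) := by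
      intro n
      apply exists_lt_of_ciInf_lt
      show iQ Y π f s y < iQ Y π f s y + 1/((n:ℝ)+1)
      have : (0:ℝ) < 1/((n:ℝ)+1) := by positivity
      linarith
    choose u hu using hchoice
    refine ⟨u, ?_, hu⟩
    have h1 : Tendsto (fun n : ℕ => iQ Y π f s y + 1/((n:ℝ)+1)) atTop
        (nhds (iQ Y π f s y)) := by
      have h2 : Tendsto (fun n : ℕ => 1/((n:ℝ)+1)) atTop (𝓝 0) :=
        tendsto_one_div_add_atTop_nhds_zero_nat
      simpa using tendsto_const_nhds.add h2
    exact tendsto_of_tendsto_of_tendsto_of_le_of_le tendsto_const_nhds h1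
      (fun n => hiQ_le s hs _) (fun n => (hu n).le)
  -- boundedness of D along any sequence
  have hbU : ∀ u : ℕ → Y, IsBoundedUnder (· ≤ ·) atTop (fun n => D (u n)) :=
    fun u => isBoundedUnder_of ⟨C, fun n => hDC _⟩
  have hbL : ∀ u : ℕ → Y, IsBoundedUnder (· ≥ ·) atTop (fun n => D (u n)) :=
    fun u => isBoundedUnder_of ⟨0, fun n => hD0 _⟩
  -- the set defining iDp
  set Sset : Set ℝ := { a : ℝ | ∃ u : ℕ → Y, IsMinSeq Y π f t y u ∧
    a = Filter.limsup (fun n => Metric.infDist (f (u n)) (π ⁻¹' {y})) Filter.atTop }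
    with hSdef
  have hiDp_eq : iDp Y π f y t = sSup Sset := rfl
  obtain ⟨u₀, hu₀, _⟩ := hminseq t ht
  have hSne : Sset.Nonempty :=
    ⟨Filter.limsup (fun n => Metric.infDist (f (u₀ n)) (π ⁻¹' {y})) Filter.atTop,
      u₀, hu₀, rfl⟩
  have hSsub : ∀ a ∈ Sset, 0 ≤ a ∧ a ≤ C := by
    rintro a ⟨u, hu, rfl⟩
    constructor
    · exact le_limsup_of_frequently_le
        (Frequently.of_forall fun n => hD0 (u n)) (hbU u)
    · exact limsup_le_of_le ((hbL u).isCoboundedUnder_le)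
        (Eventually.of_forall fun n => hDC (u n))
  have hSbdd : BddAbove Sset := ⟨C, fun a ha => (hSsub a ha).2⟩
  have hiDp0 : 0 ≤ iDp Y π f y t := by
    rw [hiDp_eq]
    obtain ⟨a0, ha0⟩ := hSne
    exact le_trans (hSsub a0 ha0).1 (le_csSup hSbdd ha0)
  -- Step 1 : upper bound for the increments
  have hupper : ∀ s : ℝ, t < s →
      (s - t)/(2*t*s) * (iDp Y π f y t)^2 ≤ iQ Y π f t y - iQ Y π f s y := by
    intro s hts
    have hs : 0 < s := lt_trans ht hts
    have hc : 0 ≤ (s - t)/(2*t*s) := div_nonneg (by linarith) (by positivity)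
    rw [hiDp_eq]
    apply sq_csSup_le_aux hSne hSbdd (fun a ha => (hSsub a ha).1) hc
    intro a ha
    obtain ⟨u, hu, ha'⟩ := ha
    set c : ℝ := (s - t)/(2*t*s) with hcdef
    have ha0 : 0 ≤ a := (hSsub a ⟨u, hu, ha'⟩).1
    have key : ∀ ε : ℝ, 0 < ε →
        iQ Y π f s y ≤ iQ Y π f t y - c*a^2 + ε*(1 + 2*c*a) := by
      intro ε hε
      have hev : ∀ᶠ n in atTop, hlF Y π f t y (u n) < iQ Y π f t y + ε :=
        hu.eventually_lt_const (by linarith)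
      have haD : a = Filter.limsup (fun n => D (u n)) Filter.atTop := ha'
      have hfr : ∃ᶠ n in atTop, a - ε < D (u n) := by
        apply frequently_lt_of_lt_limsup ((hbL u).isCoboundedUnder_le)
        rw [← haD]
        linarith
      obtain ⟨n, hn1, hn2⟩ := (hfr.and_eventually hev).exists
      have hDn : max (a - ε) 0 ≤ D (u n) := max_le hn1.le (hD0 _)
      have hsq : a^2 - 2*a*ε ≤ (D (u n))^2 := by
        have h1 : (max (a-ε) 0)^2 ≤ (D (u n))^2 :=
          pow_le_pow_left₀ (le_max_right _ _) hDn 2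
        rcases le_or_gt ε a with h | h
        · have hmx : max (a-ε) 0 = a - ε := max_eq_left (by linarith)
          rw [hmx] at h1
          nlinarith
        · nlinarith [sq_nonneg (D (u n))]
      have hstep : hlF Y π f s y (u n) = hlF Y π f t y (u n) - c * (D (u n))^2 := by
        rw [hlFeq, hlFeq, hcdef]
        field_simp
        ring
      have hmul := mul_le_mul_of_nonneg_left hsq hc
      calc iQ Y π f s y ≤ hlF Y π f s y (u n) := hiQ_le s hs _
        _ = hlF Y π f t y (u n) - c * (D (u n))^2 := hstep
        _ ≤ iQ Y π f t y + ε - c*(a^2 - 2*a*ε) := by linarith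
        _ = iQ Y π f t y - c*a^2 + ε*(1 + 2*c*a) := by ring
    have hfin : iQ Y π f s y ≤ iQ Y π f t y - c*a^2 := by
      apply le_of_forall_pos_le_add
      intro ε' hε'
      have hK : (0:ℝ) < 1 + 2*c*a := by nlinarith [mul_nonneg hc ha0]
      calc iQ Y π f s y ≤ iQ Y π f t y - c*a^2 + (ε'/(1 + 2*c*a))*(1 + 2*c*a) :=
            key _ (by positivity)
        _ = iQ Y π f t y - c*a^2 + ε' := by
            rw [div_mul_cancel₀ _ (ne_of_gt hK)]
    linarith
  -- Step 2 : lower bound for the increments, via minimizing sequences at time s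
  have hlower : ∀ s : ℝ, t < s → ∀ u : ℕ → Y, IsMinSeq Y π f s y u →
      iQ Y π f t y ≤ iQ Y π f s y +
        (s - t)/(2*t*s) * (Filter.liminf (fun n => D (u n)) Filter.atTop)^2 := by
    intro s hts u hu
    have hs : 0 < s := lt_trans ht hts
    set b : ℝ := Filter.liminf (fun n => D (u n)) Filter.atTop with hbdef
    set c : ℝ := (s - t)/(2*t*s) with hcdef
    have hc : 0 ≤ c := div_nonneg (by linarith) (by positivity)
    have hb0 : 0 ≤ b := le_liminf_of_le ((hbU u).isCoboundedUnder_ge)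
      (Eventually.of_forall fun n => hD0 (u n))
    have key : ∀ ε : ℝ, 0 < ε → ε ≤ 1 →
        iQ Y π f t y ≤ iQ Y π f s y + c*b^2 + ε*(1 + c*(2*b+1)) := by
      intro ε hε hε1
      have hev : ∀ᶠ n in atTop, hlF Y π f s y (u n) < iQ Y π f s y + ε :=
        hu.eventually_lt_const (by linarith)
      have hfr : ∃ᶠ n in atTop, D (u n) < b + ε := by
        apply frequently_lt_of_liminf_lt ((hbU u).isCoboundedUnder_ge)
        rw [← hbdef]; linarith
      obtain ⟨n, hn1, hn2⟩ := (hfr.and_eventually hev).exists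
      have hsq : (D (u n))^2 ≤ b^2 + ε*(2*b+1) := by nlinarith [hD0 (u n)]
      have hstep : hlF Y π f t y (u n) = hlF Y π f s y (u n) + c * (D (u n))^2 := by
        rw [hlFeq, hlFeq, hcdef]
        field_simp
        ring
      have hmul := mul_le_mul_of_nonneg_left hsq hc
      calc iQ Y π f t y ≤ hlF Y π f t y (u n) := hiQ_le t ht _
        _ = hlF Y π f s y (u n) + c * (D (u n))^2 := hstep
        _ ≤ iQ Y π f s y + ε + c*(b^2 + ε*(2*b+1)) := by linarith
        _ = iQ Y π f s y + c*b^2 + ε*(1 + c*(2*b+1)) := by ring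
    apply le_of_forall_pos_le_add
    intro ε' hε'
    have hK : (0:ℝ) < 1 + c*(2*b+1) := by nlinarith [mul_nonneg hc (by linarith : (0:ℝ) ≤ 2*b+1)]
    have hmin : 0 < min 1 (ε'/(1 + c*(2*b+1))) := lt_min one_pos (by positivity)
    calc iQ Y π f t y
        ≤ iQ Y π f s y + c*b^2 + (min 1 (ε'/(1 + c*(2*b+1))))*(1 + c*(2*b+1)) :=
          key _ hmin (min_le_left _ _)
      _ ≤ iQ Y π f s y + c*b^2 + (ε'/(1 + c*(2*b+1)))*(1 + c*(2*b+1)) := by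
          have := min_le_right 1 (ε'/(1 + c*(2*b+1)))
          nlinarith
      _ = iQ Y π f s y + c*b^2 + ε' := by
          rw [div_mul_cancel₀ _ (ne_of_gt hK)]
  -- reformulate as a limit of slopes
  rw [hasDerivWithinAt_iff_tendsto_slope]
  have hset : Set.Ioi t \ {t} = Set.Ioi t :=
    Set.diff_singleton_eq_self (by simp)
  rw [hset]
  set P : ℝ := iDp Y π f y t with hPdef
  set L : ℝ := -P^2 / (2*t^2) with hLdef
  by_contra hcon
  rw [Metric.tendsto_nhds] at hcon
  push_neg at hcon
  obtain ⟨ε, hε, hfreq0⟩ := hcon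
  have hfreq : ∃ᶠ s in 𝓝[Set.Ioi t] t,
      ε ≤ dist (slope (fun s => iQ Y π f s y) t s) L := by
    exact hfreq0
  have hfreq2 : ∃ᶠ s in 𝓝[Set.Ioi t] t,
      ε ≤ dist (slope (fun s => iQ Y π f s y) t s) L ∧ s ∈ Set.Ioi t :=
    hfreq.and_eventually eventually_mem_nhdsWithin
  obtain ⟨sq, hsq_tend, hsq⟩ := Filter.exists_seq_forall_of_frequently hfreq2
  have hsq_t : Tendsto sq atTop (𝓝 t) := hsq_tend.mono_right nhdsWithin_le_nhds
  have hsqt : ∀ k, t < sq k := fun k => (hsq k).2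
  have hsqpos : ∀ k, 0 < sq k := fun k => lt_trans ht (hsqt k)
  -- minimizing sequences at each time sq k
  set U : ℕ → ℕ → Y := fun k => (hminseq (sq k) (hsqpos k)).choose with hUdef
  have huk : ∀ k, IsMinSeq Y π f (sq k) y (U k) :=
    fun k => ((hminseq (sq k) (hsqpos k)).choose_spec).1
  set b : ℕ → ℝ := fun k => Filter.liminf (fun n => D (U k n)) Filter.atTop with hbdef
  have hb0 : ∀ k, 0 ≤ b k := fun k => le_liminf_of_le ((hbU _).isCoboundedUnder_ge)
    (Eventually.of_forall fun n => hD0 _)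
  -- diagonal argument : eventually b k < P + δ
  have hdiag : ∀ δ : ℝ, 0 < δ → ∀ᶠ k in atTop, b k < P + δ := by
    intro δ hδ
    by_contra hcon2
    rw [Filter.not_eventually] at hcon2
    have hcon3 : ∃ᶠ k in atTop, P + δ ≤ b k := by
      apply hcon2.mono; intro k hk; linarith [not_lt.mp hk]
    obtain ⟨φ, hφmono, hφ⟩ := Filter.extraction_of_frequently_atTop hcon3
    have hsub_t : Tendsto (fun k => sq (φ k)) atTop (𝓝 t) :=
      hsq_t.comp hφmono.tendsto_atTop
    have hpick : ∀ k : ℕ, ∃ n : ℕ,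
        hlF Y π f (sq (φ k)) y (U (φ k) n) < iQ Y π f (sq (φ k)) y + 1/((k:ℝ)+1) ∧
        P + δ - 1/((k:ℝ)+1) < D (U (φ k) n) := by
      intro k
      have hpos : (0:ℝ) < 1/((k:ℝ)+1) := by positivity
      have h1 : ∀ᶠ n in atTop,
          hlF Y π f (sq (φ k)) y (U (φ k) n) < iQ Y π f (sq (φ k)) y + 1/((k:ℝ)+1) :=
        (huk (φ k)).eventually_lt_const (by linarith)
      have h2 : ∀ᶠ n in atTop, P + δ - 1/((k:ℝ)+1) < D (U (φ k) n) := by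
        apply eventually_lt_of_lt_liminf _ (hbL _)
        calc P + δ - 1/((k:ℝ)+1) < P + δ := by linarith
          _ ≤ b (φ k) := hφ k
      exact (h1.and h2).exists
    choose nk hnk1 hnk2 using hpick
    set v : ℕ → Y := fun k => U (φ k) (nk k) with hvdef
    set e : ℕ → ℝ := fun k => 1/(2*t) - 1/(2*sq (φ k)) with hedef
    have he0 : ∀ k, 0 ≤ e k := by
      intro k
      have h1 : 1/(2*sq (φ k)) ≤ 1/(2*t) :=
        one_div_le_one_div_of_le (by linarith) (by linarith [hsqt (φ k)])
      simpa [hedef] using sub_nonneg.mpr h1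
    have hvup : ∀ k, hlF Y π f t y (v k) ≤
        iQ Y π f t y + (1/((k:ℝ)+1) + e k * C^2) := by
      intro k
      have hstep : hlF Y π f t y (v k)
          = hlF Y π f (sq (φ k)) y (v k) + e k * (D (v k))^2 := by
        rw [hlFeq, hlFeq]
        show _ = _ + (1/(2*t) - 1/(2*sq (φ k))) * (D (v k))^2
        have h1 : (sq (φ k)) ≠ 0 := (hsqpos (φ k)).ne'
        field_simp
        ring
      have hD2 : (D (v k))^2 ≤ C^2 := pow_le_pow_left₀ (hD0 _) (hDC _) 2
      have hmul : e k * (D (v k))^2 ≤ e k * C^2 := mul_le_mul_of_nonneg_left hD2 (he0 k)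
      have hmono := hiQ_mono t (sq (φ k)) ht (hsqt (φ k)).le
      have h3 : hlF Y π f (sq (φ k)) y (v k)
          < iQ Y π f (sq (φ k)) y + 1/((k:ℝ)+1) := hnk1 k
      calc hlF Y π f t y (v k)
          = hlF Y π f (sq (φ k)) y (v k) + e k * (D (v k))^2 := hstep
        _ ≤ (iQ Y π f (sq (φ k)) y + 1/((k:ℝ)+1)) + e k * C^2 :=
            add_le_add h3.le hmul
        _ ≤ iQ Y π f t y + (1/((k:ℝ)+1) + e k * C^2) := by linarith
    have hbound_t : Tendsto (fun k : ℕ => iQ Y π f t y + (1/((k:ℝ)+1) + e k * C^2))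
        atTop (𝓝 (iQ Y π f t y)) := by
      have h1 : Tendsto (fun k : ℕ => 1/((k:ℝ)+1)) atTop (𝓝 0) :=
        tendsto_one_div_add_atTop_nhds_zero_nat
      have h2 : Tendsto e atTop (𝓝 0) := by
        have h3 : Tendsto (fun k => 2 * sq (φ k)) atTop (𝓝 (2*t)) :=
          tendsto_const_nhds.mul hsub_t
        have h4 : Tendsto (fun k => 1/(2*sq (φ k))) atTop (𝓝 (1/(2*t))) :=
          Tendsto.div tendsto_const_nhds h3 (by positivity)
        have h5 : Tendsto (fun k => 1/(2*t) - 1/(2*sq (φ k))) atTop (𝓝 (1/(2*t) - 1/(2*t))) :=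
          tendsto_const_nhds.sub h4
        rw [sub_self] at h5
        exact h5
      have h6 : Tendsto (fun k : ℕ => 1/((k:ℝ)+1) + e k * C^2) atTop (𝓝 0) := by
        have := h1.add (h2.mul (tendsto_const_nhds (x := C^2)))
        simpa using this
      have h7 := (tendsto_const_nhds (x := iQ Y π f t y) (f := atTop (α := ℕ))).add h6
      simpa using h7
    have hvmin : IsMinSeq Y π f t y v :=
      tendsto_of_tendsto_of_tendsto_of_le_of_le tendsto_const_nhds hbound_t
        (fun k => hiQ_le t ht _) hvup
    set a : ℝ := Filter.limsup (fun k => D (v k)) Filter.atTop with hadef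
    have haS : a ∈ Sset := ⟨v, hvmin, rfl⟩
    have haP : a ≤ P := by rw [hiDp_eq]; exact le_csSup hSbdd haS
    have haP2 : P + δ ≤ a := by
      apply le_of_forall_pos_le_add
      intro γ hγ
      have h5 : ∀ᶠ k : ℕ in atTop, (1:ℝ)/((k:ℝ)+1) < γ :=
        tendsto_one_div_add_atTop_nhds_zero_nat.eventually_lt_const hγ
      have h6 : ∀ᶠ k in atTop, P + δ - γ ≤ D (v k) := by
        filter_upwards [h5] with k hk
        have := hnk2 k
        linarith
      have h7 : P + δ - γ ≤ a := le_limsup_of_frequently_le h6.frequently (hbU v)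
      linarith
    linarith
  -- choose δ with (P+δ)² < P² + t²ε
  set δ : ℝ := min 1 (t^2*ε/(2*P+2)) with hδdef
  have hP0 : 0 ≤ P := hiDp0
  have hδ0 : 0 < δ := lt_min one_pos (by positivity)
  have hδsq : (P+δ)^2 < P^2 + t^2*ε := by
    have h1 : δ ≤ 1 := min_le_left _ _
    have h2 : δ ≤ t^2*ε/(2*P+2) := min_le_right _ _
    have h3 : (0:ℝ) < 2*P+2 := by linarith
    have h4 : δ*(2*P+2) ≤ t^2*ε := (le_div_iff₀ h3).mp h2
    nlinarith
  -- slope bounds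
  have hAk : ∀ k, slope (fun s => iQ Y π f s y) t (sq k) ≤ -P^2/(2*t*sq k) := by
    intro k
    have hst : (0:ℝ) < sq k - t := by linarith [hsqt k]
    rw [slope_def_field]
    show (iQ Y π f (sq k) y - iQ Y π f t y)/(sq k - t) ≤ _
    rw [div_le_iff₀ hst]
    have h1 := hupper (sq k) (hsqt k)
    have h2 : -P^2/(2*t*sq k) * (sq k - t) = -((sq k - t)/(2*t*sq k) * P^2) := by
      have hs0 : (sq k) ≠ 0 := (hsqpos k).ne'
      field_simp
    rw [h2]
    linarith
  have hBk : ∀ᶠ k in atTop, -(P+δ)^2/(2*t*sq k) ≤ slope (fun s => iQ Y π f s y) t (sq k) := by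
    filter_upwards [hdiag δ hδ0] with k hk
    have hst : (0:ℝ) < sq k - t := by linarith [hsqt k]
    have h1 : iQ Y π f t y ≤ iQ Y π f (sq k) y + (sq k - t)/(2*t*sq k) * (b k)^2 :=
      hlower (sq k) (hsqt k) (U k) (huk k)
    have hb2 : (b k)^2 ≤ (P+δ)^2 := pow_le_pow_left₀ (hb0 k) hk.le 2
    have hc : 0 ≤ (sq k - t)/(2*t*sq k) :=
      div_nonneg (by linarith) (by nlinarith [hsqpos k])
    rw [slope_def_field]
    show _ ≤ (iQ Y π f (sq k) y - iQ Y π f t y)/(sq k - t)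
    rw [le_div_iff₀ hst]
    have h2 : -(P+δ)^2/(2*t*sq k) * (sq k - t) = -((sq k - t)/(2*t*sq k) * (P+δ)^2) := by
      have hs0 : (sq k) ≠ 0 := (hsqpos k).ne'
      field_simp
    rw [h2]
    have hmul := mul_le_mul_of_nonneg_left hb2 hc
    linarith
  -- limits of the bounds
  have hmulsq : Tendsto (fun k => 2*t*sq k) atTop (𝓝 (2*t*t)) :=
    tendsto_const_nhds.mul hsq_t
  have hne2 : (2*t*t : ℝ) ≠ 0 := by positivity
  have hA_t : Tendsto (fun k => -P^2/(2*t*sq k)) atTop (𝓝 (-P^2/(2*t*t))) :=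
    Tendsto.div tendsto_const_nhds hmulsq hne2
  have hB_t : Tendsto (fun k => -(P+δ)^2/(2*t*sq k)) atTop (𝓝 (-(P+δ)^2/(2*t*t))) :=
    Tendsto.div tendsto_const_nhds hmulsq hne2
  have hL_eq : L = -P^2/(2*t*t) := by
    rw [hLdef]
    have : (2*t^2:ℝ) = 2*t*t := by ring
    rw [this]
  have hLB : L - ε < -(P+δ)^2/(2*t*t) := by
    have h3 : (0:ℝ) < 2*t*t := by positivity
    have h6 : ((P+δ)^2 - P^2)/(2*t*t) < ε := (div_lt_iff₀ h3).mpr (by nlinarith)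
    have h7 : -(P+δ)^2/(2*t*t) = -P^2/(2*t*t) - ((P+δ)^2 - P^2)/(2*t*t) := by ring
    rw [hL_eq]
    linarith
  have hev1 : ∀ᶠ k in atTop, -P^2/(2*t*sq k) < L + ε := by
    apply hA_t.eventually_lt_const
    rw [hL_eq]
    linarith
  have hev2 : ∀ᶠ k in atTop, L - ε < -(P+δ)^2/(2*t*sq k) :=
    hB_t.eventually_const_lt hLB
  obtain ⟨k, hk1, hk2, hk3⟩ := (hev1.and (hev2.and hBk)).exists
  have hk4 := hAk k
  have hdist := (hsq k).1
  rw [Real.dist_eq] at hdist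
  have habs : |slope (fun s => iQ Y π f s y) t (sq k) - L| < ε :=
    abs_lt.mpr ⟨by linarith, by linarith⟩
  linarith
end
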